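/- arXiv:1703.10445 — 10 statements merged into one kernel-verified Lean document; each statement's English description precedes it below -/
import Mathlib

section
/- Let Φ be a minimal action of an abelian semigroup S on a topological space X, with acting maps φ_s. For each fixed acting map f = φ_t, if the set of fixed points Fix(f) is nonempty, then it is dense in X. -/
theorem fixedPoints_dense {S X : Type*} [AddCommSemigroup S] [TopologicalSpace X]
    (φ : S → X → X) (hcont : ∀ s, Continuous (φ s))
    (hact : ∀ s t, φ s ∘ φ t = φ (s + t))
    (hmin : ∀ x : X, Dense (Set.range fun s => φ s x))
    (t : S) (hfix : ∃ x, φ t x = x) :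
    Dense {x | φ t x = x} := by
  obtain ⟨x, hx⟩ := hfix
  refine (hmin x).mono ?_
  rintro _ ⟨s, rfl⟩
  show φ t (φ s x) = φ s x
  calc φ t (φ s x) = φ (t + s) x := congrFun (hact t s) x
    _ = φ (s + t) x := by rw [add_comm]
    _ = φ s (φ t x) := (congrFun (hact s t) x).symm
    _ = φ s x := by rw [hx]
end

section
/- Let Φ be a minimal action of an abelian semigroup S on a Hausdorff space X. Then Φ is free: for every s ∈ S, the acting map φ_s is either the identity on X or has no fixed point. -/
theorem minimal_action_free {S X : Type*} [AddCommSemigroup S] [TopologicalSpace X] [T2Space X]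
    (φ : S → X → X) (hcont : ∀ s, Continuous (φ s))
    (hact : ∀ s t, φ s ∘ φ t = φ (s + t))
    (hmin : ∀ x : X, Dense (Set.range fun s => φ s x)) :
    ∀ s : S, φ s = id ∨ ∀ x : X, φ s x ≠ x := by
  intro s
  by_cases h : ∀ x : X, φ s x ≠ x
  · exact Or.inr h
  · left
    push_neg at h
    obtain ⟨x₀, hx₀⟩ := h
    have hclosed : IsClosed {x : X | φ s x = x} :=
      isClosed_eq (hcont s) continuous_id
    have horbit : Set.range (fun t => φ t x₀) ⊆ {x : X | φ s x = x} := by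
      rintro _ ⟨t, rfl⟩
      show φ s (φ t x₀) = φ t x₀
      calc φ s (φ t x₀) = φ (s + t) x₀ := congrFun (hact s t) x₀
        _ = φ (t + s) x₀ := by rw [add_comm]
        _ = φ t (φ s x₀) := (congrFun (hact t s) x₀).symm
        _ = φ t x₀ := by rw [hx₀]
    have : {x : X | φ s x = x} = Set.univ := by
      have := hclosed.closure_subset_iff.mpr horbit
      exact Set.eq_univ_of_univ_subset ((hmin x₀).closure_eq ▸ this)
    funext x
    exact Set.eq_univ_iff_forall.mp this x
end

section
/- If X is a non-degenerate (having at least two points) Hausdorff space with the fixed point property (every continuous self-map of X has a fixed point), then X does not admit a minimal action of any abelian semigroup. -/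
theorem no_minimal_action_of_fixedPointProperty {X : Type*} [TopologicalSpace X] [T2Space X]
    [Nontrivial X]
    (hfpp : ∀ f : X → X, Continuous f → ∃ x, f x = x) :
    ∀ (S : Type*) [AddCommSemigroup S] (φ : S → X → X),
      (∀ s, Continuous (φ s)) → (∀ s t, φ s ∘ φ t = φ (s + t)) →
      ¬ (∀ x : X, Dense (Set.range fun s => φ s x)) := by
  intro S _ φ hc hcomp hmin
  -- First show every φ s is the identity.
  have hid : ∀ s y, φ s y = y := by
    intro s
    obtain ⟨x, hx⟩ := hfpp (φ s) (hc s)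
    have hfix : ∀ t, φ s (φ t x) = φ t x := by
      intro t
      have h1 : φ s (φ t x) = φ (s + t) x := congrFun (hcomp s t) x
      have h2 : φ t (φ s x) = φ (t + s) x := congrFun (hcomp t s) x
      rw [h1, add_comm, ← h2, hx]
    have hclosed : IsClosed {y : X | φ s y = y} := isClosed_eq (hc s) continuous_id
    have hsub : Set.range (fun t => φ t x) ⊆ {y : X | φ s y = y} := by
      rintro _ ⟨t, rfl⟩; exact hfix t
    intro y
    have : closure (Set.range fun t => φ t x) ⊆ {y : X | φ s y = y} :=
      hclosed.closure_subset_iff.mpr hsub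
    exact this (show y ∈ closure _ by rw [(hmin x).closure_eq]; trivial)
  -- Then orbits are singletons, contradicting density.
  obtain ⟨a, b, hab⟩ := exists_pair_ne X
  have hsub : Set.range (fun s => φ s a) ⊆ {a} := by
    rintro _ ⟨s, rfl⟩; simp [hid]
  have h1 : closure (Set.range fun s => φ s a) ⊆ {a} :=
    isClosed_singleton.closure_subset_iff.mpr hsub
  have hb : b ∈ ({a} : Set X) := h1 (show b ∈ closure _ by rw [(hmin a).closure_eq]; trivial)
  exact hab hb.symm
end

section
/- Let Φ be a minimal action of an abelian semigroup S on a compact Hausdorff space X. Then for every nonempty open set V ⊆ X there exists a finite set F ⊆ S with X = ⋃_{r ∈ F} φ_r(V). -/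
theorem finite_image_cover {S X : Type*} [AddCommSemigroup S] [TopologicalSpace X]
    [CompactSpace X] [T2Space X]
    (φ : S → X → X) (hcont : ∀ s, Continuous (φ s))
    (hact : ∀ s t, φ s ∘ φ t = φ (s + t))
    (hmin : ∀ x : X, Dense (Set.range fun s => φ s x))
    (V : Set X) (hV : V.Nonempty) (hVo : IsOpen V) :
    ∃ F : Finset S, (⋃ r ∈ F, φ r '' V) = Set.univ := by
  classical
  rcases isEmpty_or_nonempty X with hX | hX
  · exact ⟨∅, by simp [Set.univ_eq_empty_iff.mpr hX]⟩
  obtain ⟨x₀⟩ := id hX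
  obtain ⟨y₀, s₀, -⟩ := (hmin x₀).nonempty
  -- every φ s is surjective
  have hsurj : ∀ s, Function.Surjective (φ s) := by
    intro s
    have hclosed : IsClosed (Set.range (φ s)) := (isCompact_range (hcont s)).isClosed
    have hdense : Dense (Set.range (φ s)) := by
      refine (hmin (φ s x₀)).mono ?_
      rintro y ⟨t, rfl⟩
      refine ⟨φ t x₀, ?_⟩
      have h1 := congrFun (hact s t) x₀
      have h2 := congrFun (hact t s) x₀
      simp only [Function.comp_apply] at h1 h2
      show φ s (φ t x₀) = φ t (φ s x₀)
      rw [h1, h2, add_comm]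
    have : Set.range (φ s) = Set.univ := by
      rw [← hclosed.closure_eq, hdense.closure_eq]
    exact Set.range_eq_univ.mp this
  -- finite subcover of preimages
  have hcover : (Set.univ : Set X) ⊆ ⋃ s : S, φ s ⁻¹' V := by
    intro x _
    obtain ⟨y, ⟨s, rfl⟩, hyV⟩ := (hmin x).exists_mem_open hVo hV
    exact Set.mem_iUnion.mpr ⟨s, hyV⟩
  obtain ⟨F, hF⟩ := isCompact_univ.elim_finite_subcover (fun s => φ s ⁻¹' V)
    (fun s => hVo.preimage (hcont s)) hcover
  -- translate sums computed in `WithZero S` back into `S`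
  set f : WithZero S → S := WithZero.recZeroCoe s₀ (fun x => s₀ + x) with hf_def
  have hf : ∀ (z : WithZero S) (t : S), f (z + (t : WithZero S)) = f z + t := by
    intro z t
    induction z using WithZero.recZeroCoe with
    | zero => simp [hf_def]
    | coe x =>
        simp only [hf_def, ← WithZero.coe_add, WithZero.recZeroCoe_coe]
        rw [add_assoc]
  set g : S → WithZero S := fun u => (u : WithZero S) with hg_def
  refine ⟨F.image (fun t => f ((F.erase t).sum g)), ?_⟩
  apply Set.eq_univ_iff_forall.mpr
  intro x
  obtain ⟨w, hw⟩ := hsurj (f (F.sum g)) x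
  obtain ⟨t, htF, htV⟩ := Set.mem_iUnion₂.mp (hF (Set.mem_univ w))
  refine Set.mem_iUnion₂.mpr ⟨f ((F.erase t).sum g),
    Finset.mem_image.mpr ⟨t, htF, rfl⟩, φ t w, htV, ?_⟩
  have h1 := congrFun (hact (f ((F.erase t).sum g)) t) w
  simp only [Function.comp_apply] at h1
  rw [h1, ← hf]
  rw [show (F.erase t).sum g + (t : WithZero S) = F.sum g from Finset.sum_erase_add F g htF]
  exact hw
end

section
/- Let Φ be a minimal action of an abelian semigroup S on a compact Hausdorff space X. If for some nonempty open set V ⊆ X and some s ∈ S the image φ_s(V) is a singleton, then X is finite. -/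
theorem finite_of_singleton_image {S X : Type*} [AddCommSemigroup S] [TopologicalSpace X]
    [CompactSpace X] [T2Space X]
    (φ : S → X → X) (hcont : ∀ s, Continuous (φ s))
    (hact : ∀ s t, φ s ∘ φ t = φ (s + t))
    (hmin : ∀ x : X, Dense (Set.range fun s => φ s x))
    (V : Set X) (hV : V.Nonempty) (hVo : IsOpen V)
    (s : S) (x₀ : X) (himg : φ s '' V = {x₀}) :
    Finite X := by
  classical
  -- extend the action to WithZero S
  set φ' : WithZero S → X → X := fun a => WithZero.recZeroCoe id φ a with hφ'
  have hcoe : ∀ t : S, φ' (t : WithZero S) = φ t := fun t => rfl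
  have hzero : φ' 0 = id := rfl
  have hact' : ∀ a b : WithZero S, φ' (a + b) = φ' a ∘ φ' b := by
    intro a b
    induction a using WithZero.recZeroCoe with
    | zero => simp [hzero]
    | coe a =>
      induction b using WithZero.recZeroCoe with
      | zero => simp [hzero]
      | coe b => rw [← WithZero.coe_add, hcoe, hcoe, hcoe, ← hact]
  -- φ s is constant x₀ on V
  have hconst : ∀ v ∈ V, φ s v = x₀ := by
    intro v hv
    have : φ s v ∈ φ s '' V := Set.mem_image_of_mem _ hv
    rw [himg] at this; exact this
  -- cover X by preimages of V
  have hcov : ∀ x : X, ∃ t : S, φ t x ∈ V := by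
    intro x
    obtain ⟨y, hy, hyV⟩ := (hmin x).exists_mem_open hVo hV
    obtain ⟨t, rfl⟩ := hy
    exact ⟨t, hyV⟩
  obtain ⟨T, hT⟩ := IsCompact.elim_finite_subcover isCompact_univ
      (fun t : S => φ t ⁻¹' V) (fun t => hVo.preimage (hcont t))
      (fun x _ => by obtain ⟨t, ht⟩ := hcov x; exact Set.mem_iUnion.2 ⟨t, ht⟩)
  set u : S → WithZero S := fun t => ((s + t : S) : WithZero S) with hu
  set w : WithZero S := ∑ t ∈ T, u t with hw
  set F : Set X := (fun t : S => φ' (∑ t' ∈ T.erase t, u t') x₀) '' (T : Set S) with hF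
  have hFfin : F.Finite := (T.finite_toSet).image _
  have hmem : ∀ x : X, φ' w x ∈ F := by
    intro x
    obtain ⟨t, htT, htV⟩ : ∃ t ∈ T, φ t x ∈ V := by
      have := hT (Set.mem_univ x)
      simpa using this
    have hsum : w = (∑ t' ∈ T.erase t, u t') + u t := by
      rw [hw, Finset.sum_erase_add _ _ htT]
    have : φ' w x = φ' (∑ t' ∈ T.erase t, u t') x₀ := by
      rw [hsum, hact']
      simp only [Function.comp_apply]
      congr 1
      rw [hu]
      show φ' ((s + t : S) : WithZero S) x = x₀
      rw [hcoe, ← hact]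
      exact hconst _ htV
    rw [this]
    exact ⟨t, htT, rfl⟩
  -- take y in the image; its orbit lies in F
  obtain ⟨v, hv⟩ := hV
  set y : X := φ' w v with hy
  have horb : Set.range (fun t : S => φ t y) ⊆ F := by
    rintro _ ⟨t, rfl⟩
    have : φ t y = φ' w (φ t v) := by
      rw [hy, ← hcoe t, ← Function.comp_apply (f := φ' (t : WithZero S)), ← hact',
        add_comm, hact']
      rfl
    simpa [this] using hmem (φ t v)
  have hdense := hmin y
  have : (Set.univ : Set X) ⊆ F := by
    have hclosed : IsClosed F := hFfin.isClosed
    have := hdense.closure_eq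
    calc (Set.univ : Set X) = closure (Set.range fun t : S => φ t y) := this.symm
      _ ⊆ closure F := closure_mono horb
      _ = F := hclosed.closure_eq
  exact Set.finite_univ_iff.mp (hFfin.subset this)
end

section
/- Let Φ be a minimal action of an abelian semigroup S on a compact Hausdorff space X. If X has an isolated point, then X is finite. -/
theorem finite_of_isolated_point {S X : Type*} [AddCommSemigroup S] [TopologicalSpace X]
    [CompactSpace X] [T2Space X]
    (φ : S → X → X) (hcont : ∀ s, Continuous (φ s))
    (hact : ∀ s t, φ s ∘ φ t = φ (s + t))
    (hmin : ∀ x : X, Dense (Set.range fun s => φ s x))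
    (x : X) (hx : IsOpen ({x} : Set X)) :
    Finite X := by
  have key : ∀ z : X, IsOpen ({z} : Set X) := by
    intro z
    obtain ⟨_, ⟨s, rfl⟩, hs⟩ := (hmin z).exists_mem_open hx ⟨x, rfl⟩
    have hs : φ s z = x := hs
    set K : Set X := (φ s) ⁻¹' {x} with hKdef
    have hKopen : IsOpen K := (hcont s).isOpen_preimage _ hx
    have hzK : z ∈ K := by simp [hKdef, hs]
    obtain ⟨_, ⟨t, rfl⟩, hq⟩ := (hmin x).exists_mem_open hKopen ⟨z, hzK⟩
    set q : X := φ t x with hqdef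
    -- φ (s+t) maps all of K to q
    have hcollapse : ∀ y ∈ K, φ (s + t) y = q := by
      intro y hy
      have : φ t (φ s y) = φ (t + s) y := congrFun (hact t s) y
      have hy' : φ s y = x := hy
      rw [add_comm s t, ← this, hy']
    have hqK : q ∈ K := hq
    have hfixq : φ (s + t) q = q := hcollapse q hqK
    -- the fixed point set of φ (s+t) is closed and contains the dense orbit of q
    have hall : ∀ y : X, φ (s + t) y = y := by
      have hclosed : IsClosed {y : X | φ (s + t) y = y} :=
        isClosed_eq (hcont _) continuous_id
      have hsub : (Set.range fun u => φ u q) ⊆ {y : X | φ (s + t) y = y} := by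
        rintro _ ⟨u, rfl⟩
        show φ (s + t) (φ u q) = φ u q
        calc φ (s + t) (φ u q) = φ ((s + t) + u) q := congrFun (hact (s + t) u) q
          _ = φ (u + (s + t)) q := by rw [add_comm]
          _ = φ u (φ (s + t) q) := (congrFun (hact u (s + t)) q).symm
          _ = φ u q := by rw [hfixq]
      have hd : Dense {y : X | φ (s + t) y = y} := (hmin q).mono hsub
      intro y
      have := hd y
      rwa [hclosed.closure_eq] at this
    have hzq : z = q := by rw [← hall z, hcollapse z hzK]
    have hKz : K = {z} := by
      apply Set.eq_singleton_iff_unique_mem.mpr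
      exact ⟨hzK, fun y hy => by rw [← hall y, hcollapse y hy, ← hzq]⟩
    rw [← hKz]
    exact hKopen
  have : DiscreteTopology X := discreteTopology_iff_isOpen_singleton.mpr key
  exact finite_of_compact_of_discrete
end

section
/- Let X be a Hausdorff space with a free arc identified with [0,1] and f : X → X continuous without periodic points in [0,1]. Assume 0 < f(0) = c = f(1) < 1. Then the entire forward orbit {f^n(c) : n ≥ 0} is contained in (0,1). -/
theorem orbit_in_interior {X : Type*} [TopologicalSpace X] [T2Space X]
    (e : Set.Icc (0:ℝ) 1 → X) (he : Topology.IsEmbedding e)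
    (hopen : IsOpen (e '' {t : Set.Icc (0:ℝ) 1 | (t : ℝ) ∈ Set.Ioo (0:ℝ) 1}))
    (f : X → X) (hf : Continuous f)
    (hper : ∀ (x : Set.Icc (0:ℝ) 1) (k : ℕ), 1 ≤ k → f^[k] (e x) ≠ e x)
    (c : Set.Icc (0:ℝ) 1) (hc : (c : ℝ) ∈ Set.Ioo (0:ℝ) 1)
    (h0 : f (e ⟨0, by norm_num⟩) = e c) (h1 : f (e ⟨1, by norm_num⟩) = e c) :
    ∀ n : ℕ, ∃ y : Set.Icc (0:ℝ) 1, f^[n] (e c) = e y ∧ (y : ℝ) ∈ Set.Ioo (0:ℝ) 1 := by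
  classical
  set U : Set X := e '' {t : Set.Icc (0:ℝ) 1 | (t : ℝ) ∈ Set.Ioo (0:ℝ) 1} with hUdef
  have hUopen : IsOpen U := hopen
  have hecU : e c ∈ U := ⟨c, hc, rfl⟩
  have hrange_closed : IsClosed (Set.range e) :=
    (isCompact_range he.continuous).isClosed
  have hUrange : U ⊆ Set.range e := by
    rintro x ⟨t, _, rfl⟩; exact ⟨t, rfl⟩
  have hclosureU : closure U ⊆ Set.range e := closure_minimal hUrange hrange_closed
  -- the continuous "inverse" of e
  set H : Set.Icc (0:ℝ) 1 ≃ₜ Set.range e := he.toHomeomorph with hHdef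
  set ψ : X → ℝ := fun x =>
    if h : x ∈ Set.range e then ((H.symm ⟨x, h⟩ : Set.Icc (0:ℝ) 1) : ℝ) else 0 with hψdef
  have hψe : ∀ u : Set.Icc (0:ℝ) 1, ψ (e u) = (u : ℝ) := by
    intro u
    have h : e u ∈ Set.range e := ⟨u, rfl⟩
    have h2 : H.symm ⟨e u, h⟩ = u := by
      have h3 : H u = ⟨e u, h⟩ := by
        apply Subtype.ext
        rfl
      rw [← h3, Homeomorph.symm_apply_apply]
    simp only [hψdef, dif_pos h, h2]
  have hψcont : ContinuousOn ψ (Set.range e) := by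
    rw [continuousOn_iff_continuous_restrict]
    have h4 : (Set.range e).domRestrict ψ = fun x => ((H.symm x : Set.Icc (0:ℝ) 1) : ℝ) := by
      funext x
      simp only [Set.domRestrict_apply, hψdef, dif_pos x.2]
    rw [h4]
    exact continuous_subtype_val.comp H.symm.continuous
  -- projection and iterated maps
  set π : ℝ → Set.Icc (0:ℝ) 1 := Set.projIcc 0 1 zero_le_one with hπdef
  set P : ℕ → ℝ → X := fun k t => f^[k] (e (π t)) with hPdef
  have hPcont : ∀ k, Continuous (P k) := fun k =>
    (hf.iterate k).comp (he.continuous.comp continuous_projIcc)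
  have hPP : ∀ (k : ℕ) (t : ℝ), P k t = f^[k] (e (π t)) := fun _ _ => rfl
  have hππ : ∀ t : ℝ, π t = Set.projIcc 0 1 zero_le_one t := fun _ => rfl
  have hPcoe : ∀ (k : ℕ) (u : Set.Icc (0:ℝ) 1), P k (u : ℝ) = f^[k] (e u) := by
    intro k u
    rw [hPP, hππ, Set.projIcc_val]
  -- crossing lemma : gives a periodic point, contradiction
  have crossing : ∀ (k : ℕ), 1 ≤ k → ∀ a b : ℝ, 0 ≤ a → a ≤ b → b ≤ 1 →
      (∀ t ∈ Set.Icc a b, P k t ∈ Set.range e) →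
      a ≤ ψ (P k a) → ψ (P k b) ≤ b → False := by
    intro k hk a b ha hab hb1 hmem hfa hfb
    have hφ : ContinuousOn (fun t => ψ (P k t)) (Set.Icc a b) :=
      hψcont.comp (hPcont k).continuousOn hmem
    have hg : ContinuousOn (fun t => ψ (P k t) - t) (Set.Icc a b) := hφ.sub continuousOn_id
    have h0m : (0:ℝ) ∈ Set.Icc (ψ (P k b) - b) (ψ (P k a) - a) :=
      ⟨by linarith, by linarith⟩
    obtain ⟨p, hp, hgp⟩ := intermediate_value_Icc' hab hg h0m
    simp only at hgp
    have hpe : ψ (P k p) = p := by linarith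
    obtain ⟨w, hw⟩ := hmem p hp
    have hwp : (w : ℝ) = p := by
      rw [← hpe, ← hw, hψe]
    have hπp : π p = w := by rw [← hwp, hππ, Set.projIcc_val]
    apply hper w k hk
    calc f^[k] (e w) = P k p := by rw [hPP, hπp]
      _ = e w := hw.symm
  -- covering loop lemma : two intervals covering each other
  have loop : ∀ (k k' : ℕ), 1 ≤ k → 1 ≤ k' → ∀ a b a' b' : ℝ,
      0 ≤ a → a ≤ b → b ≤ 1 → 0 ≤ a' → a' ≤ b' → b' ≤ 1 →
      (∀ t ∈ Set.Icc a b, P k t ∈ Set.range e) →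
      (∀ t ∈ Set.Icc a' b', P k' t ∈ Set.range e) →
      ψ (P k a) ≤ a' → b' ≤ ψ (P k b) →
      ψ (P k' a') ≤ a → b ≤ ψ (P k' b') → False := by
    intro k k' hk hk' a b a' b' ha hab hb1 ha' hab' hb1' hmem hmem' h1c h2c h3c h4c
    set φ : ℝ → ℝ := fun t => ψ (P k t) with hφdef
    set φ' : ℝ → ℝ := fun t => ψ (P k' t) with hφ'def
    have hφ : ContinuousOn φ (Set.Icc a b) := hψcont.comp (hPcont k).continuousOn hmem
    have hφ' : ContinuousOn φ' (Set.Icc a' b') := hψcont.comp (hPcont k').continuousOn hmem'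
    have hb'mem : b' ∈ Set.Icc (φ a) (φ b) := ⟨le_trans h1c hab', h2c⟩
    obtain ⟨v₀, hv₀, hv₀e⟩ := intermediate_value_Icc hab hφ hb'mem
    set S := Set.Icc a b ∩ φ ⁻¹' {b'} with hSdef
    have hSc : IsClosed S := hφ.preimage_isClosed_of_isClosed isClosed_Icc isClosed_singleton
    have hSne : S.Nonempty := ⟨v₀, hv₀, hv₀e⟩
    have hSbdd : BddBelow S := ⟨a, fun t ht => ht.1.1⟩
    set v := sInf S with hvdef
    have hvS : v ∈ S := hSc.csInf_mem hSne hSbdd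
    have hvmin : ∀ t ∈ S, v ≤ t := fun t ht => csInf_le hSbdd ht
    have hva : a ≤ v := hvS.1.1
    have hvb : v ≤ b := hvS.1.2
    have hφv : φ v = b' := hvS.2
    have hφav : ContinuousOn φ (Set.Icc a v) := hφ.mono (Set.Icc_subset_Icc le_rfl hvb)
    have ha'mem : a' ∈ Set.Icc (φ a) (φ v) := ⟨h1c, by rw [hφv]; exact hab'⟩
    obtain ⟨u₀, hu₀, hu₀e⟩ := intermediate_value_Icc hva hφav ha'mem
    set T := Set.Icc a v ∩ φ ⁻¹' {a'} with hTdef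
    have hTc : IsClosed T := hφav.preimage_isClosed_of_isClosed isClosed_Icc isClosed_singleton
    have hTne : T.Nonempty := ⟨u₀, hu₀, hu₀e⟩
    have hTbdd : BddAbove T := ⟨v, fun t ht => ht.1.2⟩
    set u := sSup T with hudef
    have huT : u ∈ T := hTc.csSup_mem hTne hTbdd
    have humax : ∀ t ∈ T, t ≤ u := fun t ht => le_csSup hTbdd ht
    have hau : a ≤ u := huT.1.1
    have huv : u ≤ v := huT.1.2
    have hφu : φ u = a' := huT.2
    have hmap : ∀ t ∈ Set.Icc u v, φ t ∈ Set.Icc a' b' := by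
      intro t ht
      constructor
      · by_contra hlt
        push_neg at hlt
        have h5 : a' ∈ Set.Icc (φ t) (φ v) := ⟨le_of_lt hlt, by rw [hφv]; exact hab'⟩
        obtain ⟨s, hs, hse⟩ := intermediate_value_Icc ht.2
          (hφ.mono (Set.Icc_subset_Icc (le_trans hau ht.1) hvb)) h5
        have hsT : s ∈ T := ⟨⟨le_trans hau (le_trans ht.1 hs.1), hs.2⟩, hse⟩
        have hsu : s ≤ u := humax s hsT
        have htu : u < t := by
          rcases lt_or_eq_of_le ht.1 with h | h
          · exact h
          · exfalso; rw [← h, hφu] at hlt; exact lt_irrefl _ hlt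
        linarith [hs.1]
      · by_contra hgt
        push_neg at hgt
        have h5 : b' ∈ Set.Icc (φ u) (φ t) := ⟨by rw [hφu]; exact hab', le_of_lt hgt⟩
        obtain ⟨s, hs, hse⟩ := intermediate_value_Icc ht.1
          (hφ.mono (Set.Icc_subset_Icc hau (le_trans ht.2 hvb))) h5
        have hsS : s ∈ S := ⟨⟨le_trans hau hs.1, le_trans hs.2 (le_trans ht.2 hvb)⟩, hse⟩
        have hvs : v ≤ s := hvmin s hsS
        have htv : t < v := by
          rcases lt_or_eq_of_le ht.2 with h | h
          · exact h
          · exfalso; rw [h, hφv] at hgt; exact lt_irrefl _ hgt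
        linarith [hs.2]
      -- fixed point of the composition
    have hΘ : ContinuousOn (fun t => φ' (φ t) - t) (Set.Icc u v) :=
      ((hφ'.comp (hφ.mono (Set.Icc_subset_Icc hau hvb)) hmap).sub continuousOn_id)
    have h0m : (0:ℝ) ∈ Set.Icc (φ' (φ u) - u) (φ' (φ v) - v) := by
      rw [hφu, hφv]
      constructor
      · linarith
      · linarith
    obtain ⟨p, hp, hgp⟩ := intermediate_value_Icc huv hΘ h0m
    simp only at hgp
    have hfix : φ' (φ p) = p := by linarith
    have hpab : p ∈ Set.Icc a b := ⟨le_trans hau hp.1, le_trans hp.2 hvb⟩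
    obtain ⟨w, hw⟩ := hmem p hpab
    have hφp : φ p = (w : ℝ) := by rw [hφdef]; simp only; rw [← hw, hψe]
    have hφpmem : φ p ∈ Set.Icc a' b' := hmap p hp
    obtain ⟨w', hw'⟩ := hmem' (φ p) hφpmem
    have hφ'p : φ' (φ p) = (w' : ℝ) := by rw [hφ'def]; simp only; rw [← hw', hψe]
    have hp0 : 0 ≤ p := le_trans ha hpab.1
    have hp1 : p ≤ 1 := le_trans hpab.2 hb1
    have hπp : ((π p : Set.Icc (0:ℝ) 1) : ℝ) = p := by
      rw [hππ, Set.projIcc_of_mem zero_le_one ⟨hp0, hp1⟩]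
    have hπφp : π (φ p) = w := by rw [hφp, hππ, Set.projIcc_val]
    have hiter : f^[k' + k] (e (π p)) = e w' := by
      rw [Function.iterate_add_apply]
      have h6 : f^[k] (e (π p)) = e w := hw.symm
      rw [h6]
      have h7 : f^[k'] (e w) = P k' (φ p) := by rw [hPP, hπφp]
      rw [h7]
      exact hw'.symm
    have hww : w' = π p := by
      apply Subtype.ext
      rw [hπp, ← hfix, hφ'p]
    rw [hww] at hiter
    exact hper (π p) (k' + k) (le_trans hk' (Nat.le_add_right _ _)) hiter
  -- first-exit lemma (from the left)
  have exitL : ∀ (k : ℕ) (a b : ℝ), a ≤ b → P k a ∈ U →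
      (∃ t, t ∈ Set.Icc a b ∧ P k t ∉ U) →
      ∃ s, a < s ∧ s ≤ b ∧ (∀ t ∈ Set.Ico a s, P k t ∈ U) ∧ P k s ∉ U ∧
        (P k s = e ⟨0, by norm_num⟩ ∨ P k s = e ⟨1, by norm_num⟩) ∧
        (∀ t ∈ Set.Icc a b, P k t ∉ U → s ≤ t) := by
    intro k a b hab hPa hex
    set S := Set.Icc a b ∩ (P k) ⁻¹' Uᶜ with hSdef
    have hSc : IsClosed S := isClosed_Icc.inter (hUopen.isClosed_compl.preimage (hPcont k))
    have hSne : S.Nonempty := by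
      obtain ⟨t, ht, htn⟩ := hex
      exact ⟨t, ht, htn⟩
    have hSbdd : BddBelow S := ⟨a, fun t ht => ht.1.1⟩
    set s := sInf S with hsdef
    have hsS : s ∈ S := hSc.csInf_mem hSne hSbdd
    have hsmin : ∀ t ∈ S, s ≤ t := fun t ht => csInf_le hSbdd ht
    have has : a ≤ s := hsS.1.1
    have hlt : a < s := by
      rcases lt_or_eq_of_le has with h | h
      · exact h
      · exact absurd (h ▸ hPa) hsS.2
    have hIco : ∀ t ∈ Set.Ico a s, P k t ∈ U := by
      intro t ht
      by_contra hnot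
      exact absurd (hsmin t ⟨⟨ht.1, le_trans (le_of_lt ht.2) hsS.1.2⟩, hnot⟩)
        (not_le.mpr ht.2)
    have hcl : P k s ∈ closure U := by
      have h7 : s ∈ closure (Set.Ico a s) := by
        rw [closure_Ico (ne_of_lt hlt)]
        exact ⟨has, le_rfl⟩
      have h8 : P k s ∈ P k '' closure (Set.Ico a s) := ⟨s, h7, rfl⟩
      have h9 : P k '' closure (Set.Ico a s) ⊆ closure (P k '' Set.Ico a s) :=
        image_closure_subset_closure_image (hPcont k)
      have h10 : closure (P k '' Set.Ico a s) ⊆ closure U := by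
        apply closure_mono
        rintro x ⟨t, ht, rfl⟩
        exact hIco t ht
      exact h10 (h9 h8)
    obtain ⟨w, hw⟩ := hclosureU hcl
    have hwIoo : ¬ ((w : ℝ) ∈ Set.Ioo (0:ℝ) 1) := fun hmem => hsS.2 (hw ▸ ⟨w, hmem, rfl⟩)
    have hw01 : (w : ℝ) = 0 ∨ (w : ℝ) = 1 := by
      rcases w.2.1.lt_or_eq with h | h
      · rcases w.2.2.lt_or_eq with h' | h'
        · exact absurd ⟨h, h'⟩ hwIoo
        · exact Or.inr h'
      · exact Or.inl h.symm
    refine ⟨s, hlt, hsS.1.2, hIco, hsS.2, ?_, fun t ht hnot => hsmin t ⟨ht, hnot⟩⟩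
    rcases hw01 with h | h
    · left; rw [← hw]; congr 1; exact Subtype.ext h
    · right; rw [← hw]; congr 1; exact Subtype.ext h
  -- last-exit lemma (from the right)
  have exitR : ∀ (k : ℕ) (a b : ℝ), a ≤ b → P k b ∈ U →
      (∃ t, t ∈ Set.Icc a b ∧ P k t ∉ U) →
      ∃ s, a ≤ s ∧ s < b ∧ (∀ t ∈ Set.Ioc s b, P k t ∈ U) ∧ P k s ∉ U ∧
        (P k s = e ⟨0, by norm_num⟩ ∨ P k s = e ⟨1, by norm_num⟩) ∧
        (∀ t ∈ Set.Icc a b, P k t ∉ U → t ≤ s) := by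
    intro k a b hab hPb hex
    set S := Set.Icc a b ∩ (P k) ⁻¹' Uᶜ with hSdef
    have hSc : IsClosed S := isClosed_Icc.inter (hUopen.isClosed_compl.preimage (hPcont k))
    have hSne : S.Nonempty := by
      obtain ⟨t, ht, htn⟩ := hex
      exact ⟨t, ht, htn⟩
    have hSbdd : BddAbove S := ⟨b, fun t ht => ht.1.2⟩
    set s := sSup S with hsdef
    have hsS : s ∈ S := hSc.csSup_mem hSne hSbdd
    have hsmax : ∀ t ∈ S, t ≤ s := fun t ht => le_csSup hSbdd ht
    have hsb : s ≤ b := hsS.1.2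
    have hlt : s < b := by
      rcases lt_or_eq_of_le hsb with h | h
      · exact h
      · exact absurd (h ▸ hPb) hsS.2
    have hIoc : ∀ t ∈ Set.Ioc s b, P k t ∈ U := by
      intro t ht
      by_contra hnot
      exact absurd (hsmax t ⟨⟨le_trans hsS.1.1 (le_of_lt ht.1), ht.2⟩, hnot⟩)
        (not_le.mpr ht.1)
    have hcl : P k s ∈ closure U := by
      have h7 : s ∈ closure (Set.Ioc s b) := by
        rw [closure_Ioc (ne_of_lt hlt)]
        exact ⟨le_rfl, hsb⟩
      have h8 : P k s ∈ P k '' closure (Set.Ioc s b) := ⟨s, h7, rfl⟩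
      have h9 : P k '' closure (Set.Ioc s b) ⊆ closure (P k '' Set.Ioc s b) :=
        image_closure_subset_closure_image (hPcont k)
      have h10 : closure (P k '' Set.Ioc s b) ⊆ closure U := by
        apply closure_mono
        rintro x ⟨t, ht, rfl⟩
        exact hIoc t ht
      exact h10 (h9 h8)
    obtain ⟨w, hw⟩ := hclosureU hcl
    have hwIoo : ¬ ((w : ℝ) ∈ Set.Ioo (0:ℝ) 1) := fun hmem => hsS.2 (hw ▸ ⟨w, hmem, rfl⟩)
    have hw01 : (w : ℝ) = 0 ∨ (w : ℝ) = 1 := by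
      rcases w.2.1.lt_or_eq with h | h
      · rcases w.2.2.lt_or_eq with h' | h'
        · exact absurd ⟨h, h'⟩ hwIoo
        · exact Or.inr h'
      · exact Or.inl h.symm
    refine ⟨s, hsS.1.1, hlt, hIoc, hsS.2, ?_, fun t ht hnot => hsmax t ⟨ht, hnot⟩⟩
    rcases hw01 with h | h
    · left; rw [← hw]; congr 1; exact Subtype.ext h
    · right; rw [← hw]; congr 1; exact Subtype.ext h
  -- main argument
  intro n
  by_contra hcon
  push_neg at hcon
  have hnotU : f^[n] (e c) ∉ U := by
    rintro ⟨t, ht, hte⟩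
    exact hcon t hte.symm ht
  have hexN : ∃ n, f^[n] (e c) ∉ U := ⟨n, hnotU⟩
  set N := Nat.find hexN with hNdef
  have hN : f^[N] (e c) ∉ U := Nat.find_spec hexN
  have hNmin : ∀ m, m < N → f^[m] (e c) ∈ U := by
    intro m hmN
    by_contra h
    exact Nat.find_min hexN hmN h
  obtain ⟨m, hm⟩ : ∃ m, N = m + 1 := by
    rcases Nat.eq_zero_or_pos N with h | h
    · exfalso
      apply hN
      rw [h]
      simpa using hecU
    · exact ⟨N - 1, by omega⟩
  have hN1 : 1 ≤ N := by omega
  obtain ⟨y, hy, hye⟩ := hNmin m (by omega)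
  -- key endpoint computations
  have h0' : f (e (π 0)) = e c := by
    have : π 0 = ⟨0, by norm_num⟩ := by
      rw [hππ]; exact Set.projIcc_left zero_le_one
    rw [this]; exact h0
  have h1' : f (e (π 1)) = e c := by
    have : π 1 = ⟨1, by norm_num⟩ := by
      rw [hππ]; exact Set.projIcc_right zero_le_one
    rw [this]; exact h1
  have hPN0 : P N 0 = e y := by
    rw [hPP, hm, Function.iterate_succ_apply, h0']
    exact hye.symm
  have hPN1 : P N 1 = e y := by
    rw [hPP, hm, Function.iterate_succ_apply, h1']
    exact hye.symm
  have hPNc : P N (c : ℝ) ∉ U := by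
    rw [hPcoe]
    exact hN
  have hc0 : (0:ℝ) < (c : ℝ) := hc.1
  have hc1 : (c : ℝ) < 1 := hc.2
  have hy0 : (0:ℝ) < (y : ℝ) := hy.1
  have hy1 : (y : ℝ) < 1 := hy.2
  -- σ1 : first exit of P N in [0, c]
  obtain ⟨σ1, hσ1pos, hσ1c, hIco1, hσ1notU, hσ1val, hσ1min⟩ :=
    exitL N 0 (c : ℝ) (le_of_lt hc0) (by rw [hPN0]; exact ⟨y, hy, rfl⟩)
      ⟨(c : ℝ), ⟨le_of_lt hc0, le_rfl⟩, hPNc⟩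
  have hσ11 : σ1 ≤ 1 := le_trans hσ1c (le_of_lt hc1)
  have hmem1 : ∀ t ∈ Set.Icc 0 σ1, P N t ∈ Set.range e := by
    intro t ht
    rcases lt_or_eq_of_le ht.2 with h | h
    · exact hUrange (hIco1 t ⟨ht.1, h⟩)
    · rw [h]
      rcases hσ1val with hv | hv
      · exact ⟨_, hv.symm⟩
      · exact ⟨_, hv.symm⟩
  have hσ1v : P N σ1 = e ⟨1, by norm_num⟩ := by
    rcases hσ1val with hv | hv
    · exfalso
      apply crossing N hN1 0 σ1 le_rfl (le_of_lt hσ1pos) hσ11 hmem1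
      · rw [hPN0, hψe]; exact le_of_lt hy0
      · rw [hv, hψe]; exact le_of_lt hσ1pos
    · exact hv
  -- σ2 : last exit of P N in [c, 1]
  obtain ⟨σ2, hcσ2, hσ2lt1, hIoc2, hσ2notU, hσ2val, hσ2max⟩ :=
    exitR N (c : ℝ) 1 (le_of_lt hc1) (by rw [hPN1]; exact ⟨y, hy, rfl⟩)
      ⟨(c : ℝ), ⟨le_rfl, le_of_lt hc1⟩, hPNc⟩
  have hσ20 : 0 ≤ σ2 := le_trans (le_of_lt hc0) hcσ2
  have hmem2 : ∀ t ∈ Set.Icc σ2 1, P N t ∈ Set.range e := by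
    intro t ht
    rcases lt_or_eq_of_le ht.1 with h | h
    · exact hUrange (hIoc2 t ⟨h, ht.2⟩)
    · rw [← h]
      rcases hσ2val with hv | hv
      · exact ⟨_, hv.symm⟩
      · exact ⟨_, hv.symm⟩
  have hσ2v : P N σ2 = e ⟨0, by norm_num⟩ := by
    rcases hσ2val with hv | hv
    · exact hv
    · exfalso
      apply crossing N hN1 σ2 1 hσ20 (le_of_lt hσ2lt1) le_rfl hmem2
      · rw [hv, hψe]; exact le_of_lt hσ2lt1
      · rw [hPN1, hψe]; exact le_of_lt hy1
  have hσ1σ2 : σ1 ≤ σ2 := le_trans hσ1c hcσ2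
  -- second level: P (N+1) on [σ1, σ2], endpoints map to e c
  have hQσ1 : P (N + 1) σ1 = e c := by
    rw [hPP, Function.iterate_succ_apply']
    have h6 : f^[N] (e (π σ1)) = e ⟨1, by norm_num⟩ := hσ1v
    rw [h6]
    exact h1
  have hQσ2 : P (N + 1) σ2 = e c := by
    rw [hPP, Function.iterate_succ_apply']
    have h6 : f^[N] (e (π σ2)) = e ⟨0, by norm_num⟩ := hσ2v
    rw [h6]
    exact h0
  have hN11 : 1 ≤ N + 1 := by omega
  by_cases hexB : ∃ t, t ∈ Set.Icc σ1 σ2 ∧ P (N + 1) t ∉ U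
  · -- exit points τ1, τ2 of P (N+1) in [σ1, σ2]
    obtain ⟨τ1, hστ1, hτ1σ2, hIcoτ1, hτ1notU, hτ1val, hτ1min⟩ :=
      exitL (N + 1) σ1 σ2 hσ1σ2 (by rw [hQσ1]; exact hecU) hexB
    obtain ⟨τ2, hστ2, hτ2σ2, hIocτ2, hτ2notU, hτ2val, hτ2max⟩ :=
      exitR (N + 1) σ1 σ2 hσ1σ2 (by rw [hQσ2]; exact hecU) hexB
    have hτ10 : 0 ≤ τ1 := le_trans (le_of_lt hσ1pos) (le_of_lt hστ1)
    have hτ11 : τ1 ≤ 1 := le_trans hτ1σ2 (le_of_lt hσ2lt1)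
    have hτ20 : 0 ≤ τ2 := le_trans (le_of_lt hσ1pos) hστ2
    have hτ21 : τ2 ≤ 1 := le_trans (le_of_lt hτ2σ2) (le_of_lt hσ2lt1)
    have hmem3 : ∀ t ∈ Set.Icc σ1 τ1, P (N + 1) t ∈ Set.range e := by
      intro t ht
      rcases lt_or_eq_of_le ht.2 with h | h
      · exact hUrange (hIcoτ1 t ⟨ht.1, h⟩)
      · rw [h]
        rcases hτ1val with hv | hv
        · exact ⟨_, hv.symm⟩
        · exact ⟨_, hv.symm⟩
    have hτ1v : P (N + 1) τ1 = e ⟨1, by norm_num⟩ := by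
      rcases hτ1val with hv | hv
      · exfalso
        apply crossing (N + 1) hN11 σ1 τ1 (le_of_lt hσ1pos) (le_of_lt hστ1) hτ11 hmem3
        · rw [hQσ1, hψe]; exact hσ1c
        · rw [hv, hψe]; exact hτ10
      · exact hv
    have hmem4 : ∀ t ∈ Set.Icc τ2 σ2, P (N + 1) t ∈ Set.range e := by
      intro t ht
      rcases lt_or_eq_of_le ht.1 with h | h
      · exact hUrange (hIocτ2 t ⟨h, ht.2⟩)
      · rw [← h]
        rcases hτ2val with hv | hv
        · exact ⟨_, hv.symm⟩
        · exact ⟨_, hv.symm⟩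
    have hτ2v : P (N + 1) τ2 = e ⟨0, by norm_num⟩ := by
      rcases hτ2val with hv | hv
      · exact hv
      · exfalso
        apply crossing (N + 1) hN11 τ2 σ2 hτ20 (le_of_lt hτ2σ2) (le_of_lt hσ2lt1) hmem4
        · rw [hv, hψe]; exact hτ21
        · rw [hQσ2, hψe]; exact hcσ2
    have hτ12 : τ1 ≤ τ2 :=
      hτ1min τ2 ⟨hστ2, le_of_lt hτ2σ2⟩ hτ2notU
    rcases le_or_gt (y : ℝ) τ2 with hyτ | hyτ
    · -- loop : [0, σ1] (time N, y → 1) covers [τ2, σ2]; which (time N+1, 0 → c) covers [0, σ1]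
      apply loop N (N + 1) hN1 hN11 0 σ1 τ2 σ2 le_rfl (le_of_lt hσ1pos) hσ11
        hτ20 (le_of_lt hτ2σ2) (le_of_lt hσ2lt1) hmem1 hmem4
      · rw [hPN0, hψe]; exact hyτ
      · rw [hσ1v, hψe]; exact le_of_lt hσ2lt1
      · rw [hτ2v, hψe]
      · rw [hQσ2, hψe]; exact hσ1c
    · -- loop : [σ1, τ1] (time N+1, c → 1) covers [σ2, 1]; which (time N, 0 → y) covers [σ1, τ1]
      apply loop (N + 1) N hN11 hN1 σ1 τ1 σ2 1 (le_of_lt hσ1pos) (le_of_lt hστ1) hτ11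
        hσ20 (le_of_lt hσ2lt1) le_rfl hmem3 hmem2
      · rw [hQσ1, hψe]; exact hcσ2
      · rw [hτ1v, hψe]
      · rw [hσ2v, hψe]; exact le_of_lt hσ1pos
      · rw [hPN1, hψe]; exact le_of_lt (lt_of_le_of_lt hτ12 hyτ)
  · -- no exit: crossing on [σ1, σ2] with P (N+1)
    push_neg at hexB
    apply crossing (N + 1) hN11 σ1 σ2 (le_of_lt hσ1pos) hσ1σ2 (le_of_lt hσ2lt1)
      (fun t ht => hUrange (hexB t ht))
    · rw [hQσ1, hψe]; exact hσ1c
    · rw [hQσ2, hψe]; exact hcσ2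
end

section
/- Let X be a Hausdorff space that is a union of finitely many arcs (subsets homeomorphic to [0,1]). Then the union of all free intervals of X is dense in X. -/
/-- A free interval in a space: an open subset homeomorphic to the open interval `(0,1)`. -/
def IsFreeInterval {X : Type*} [TopologicalSpace X] (J : Set X) : Prop :=
  IsOpen J ∧ Nonempty (J ≃ₜ Set.Ioo (0:ℝ) 1)

/-- An arc: a subset homeomorphic to `[0,1]`. -/
def IsArc {X : Type*} [TopologicalSpace X] (A : Set X) : Prop :=
  Nonempty (A ≃ₜ Set.Icc (0:ℝ) 1)

/-- `Ioo a b` is homeomorphic to `Ioo 0 1`. -/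
noncomputable def iooHomeo {a b : ℝ} (h : a < b) :
    (Set.Ioo a b : Set ℝ) ≃ₜ Set.Ioo (0:ℝ) 1 := by
  have h' : (b - a) ≠ 0 := sub_ne_zero.mpr h.ne'
  have := (affineHomeomorph (b - a) a h').image (Set.Ioo (0:ℝ) 1)
  rw [affineHomeomorph_image_Ioo _ _ _ _ (by linarith)] at this
  have h2 : Set.Ioo ((b - a) * 0 + a) ((b - a) * 1 + a) = Set.Ioo a b := by norm_num
  rw [h2] at this
  exact this.symm

theorem exists_freeInterval_subset {X : Type*} [TopologicalSpace X] [T2Space X]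
    {A V : Set X} (hA : IsArc A) (hV : IsOpen V) (hVA : V ⊆ A) (hne : V.Nonempty) :
    ∃ J, IsFreeInterval J ∧ J ⊆ V ∧ J.Nonempty := by
  obtain ⟨e⟩ := hA
  set f : Set.Icc (0:ℝ) 1 → X := fun t => (e.symm t : X) with hf
  have hf_emb : Topology.IsEmbedding f :=
    Topology.IsEmbedding.subtypeVal.comp e.symm.isEmbedding
  have hW : IsOpen (f ⁻¹' V) := hV.preimage hf_emb.continuous
  obtain ⟨O, hO, hOW⟩ := isOpen_induced_iff.mp hW
  obtain ⟨x, hxV⟩ := hne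
  have hxA : x ∈ A := hVA hxV
  set t0 : Set.Icc (0:ℝ) 1 := e ⟨x, hxA⟩ with ht0def
  have ht0W : t0 ∈ f ⁻¹' V := by
    show f t0 ∈ V
    simp only [hf, ht0def, Homeomorph.symm_apply_apply]
    exact hxV
  have ht0O : (t0 : ℝ) ∈ O := by rw [← hOW] at ht0W; exact ht0W
  have ht0cl : ((t0 : ℝ)) ∈ closure (Set.Ioo (0:ℝ) 1) := by
    rw [closure_Ioo (by norm_num : (0:ℝ) ≠ 1)]; exact t0.2
  obtain ⟨t1, ht1O, ht1⟩ := mem_closure_iff.mp ht0cl O hO ht0O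
  have hmem : O ∩ Set.Ioo 0 1 ∈ nhds t1 :=
    (hO.inter isOpen_Ioo).mem_nhds ⟨ht1O, ht1⟩
  obtain ⟨a, b, hab, hsub⟩ := mem_nhds_iff_exists_Ioo_subset.mp hmem
  have hablt : a < b := hab.1.trans hab.2
  have hIccsub : Set.Ioo a b ⊆ Set.Icc (0:ℝ) 1 :=
    fun y hy => Set.Ioo_subset_Icc_self (hsub hy).2
  set g : Set.Ioo a b → X := f ∘ Set.inclusion hIccsub with hg
  have hg_emb : Topology.IsEmbedding g :=
    hf_emb.comp (Topology.IsEmbedding.inclusion hIccsub)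
  set J : Set X := Set.range g with hJ
  -- J ⊆ V
  have hJV : J ⊆ V := by
    rintro _ ⟨s, rfl⟩
    have h1 : ((Set.inclusion hIccsub s : Set.Icc (0:ℝ) 1) : ℝ) ∈ O := (hsub s.2).1
    have h2 : Set.inclusion hIccsub s ∈ f ⁻¹' V := by rw [← hOW]; exact h1
    exact h2
  -- J nonempty
  have hJne : J.Nonempty := ⟨g ⟨t1, hab⟩, ⟨t1, hab⟩, rfl⟩
  -- J is open
  have hK : IsClosed (f '' ((Subtype.val ⁻¹' (Set.Ioo a b))ᶜ : Set (Set.Icc (0:ℝ) 1))) := by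
    have hcpt : IsCompact ((Subtype.val ⁻¹' (Set.Ioo a b))ᶜ : Set (Set.Icc (0:ℝ) 1)) :=
      (isOpen_Ioo.preimage continuous_subtype_val).isClosed_compl.isCompact
    exact (hcpt.image hf_emb.continuous).isClosed
  have hJeq : J = V ∩ (f '' ((Subtype.val ⁻¹' (Set.Ioo a b))ᶜ : Set (Set.Icc (0:ℝ) 1)))ᶜ := by
    ext y
    constructor
    · rintro ⟨s, rfl⟩
      refine ⟨hJV ⟨s, rfl⟩, ?_⟩
      rintro ⟨u, hu, huy⟩
      have : u = Set.inclusion hIccsub s := hf_emb.injective huy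
      exact hu (by rw [this]; exact s.2)
    · rintro ⟨hyV, hyK⟩
      have hyA : y ∈ A := hVA hyV
      set u : Set.Icc (0:ℝ) 1 := e ⟨y, hyA⟩ with hu
      have hfu : f u = y := by simp [hf, hu]
      have hub : (u : ℝ) ∈ Set.Ioo a b := by
        by_contra hcon
        exact hyK ⟨u, hcon, hfu⟩
      refine ⟨⟨(u : ℝ), hub⟩, ?_⟩
      show f _ = y
      rw [← hfu]
  have hJopen : IsOpen J := hJeq ▸ hV.inter hK.isOpen_compl
  refine ⟨J, ⟨hJopen, ?_⟩, hJV, hJne⟩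
  exact ⟨((hg_emb.toHomeomorph).symm.trans (iooHomeo hablt))⟩

theorem dense_free_intervals_of_finite_union_of_arcs {X : Type*} [TopologicalSpace X]
    [T2Space X] (n : ℕ) (A : Fin n → Set X) (hA : ∀ i, IsArc (A i))
    (hcov : (⋃ i, A i) = Set.univ) :
    Dense (⋃₀ {J : Set X | IsFreeInterval J}) := by
  have hcomp : ∀ i, IsCompact (A i) := by
    intro i
    obtain ⟨e⟩ := hA i
    have : CompactSpace (A i) := e.symm.compactSpace
    exact isCompact_iff_compactSpace.mpr this
  have hclosed : ∀ i, IsClosed (A i) := fun i => (hcomp i).isClosed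
  have : CompactSpace X := by
    refine ⟨?_⟩
    rw [← hcov]
    exact isCompact_iUnion hcomp
  have hdense : Dense (⋃ i, interior (A i)) :=
    dense_iUnion_interior_of_closed hclosed hcov
  rw [dense_iff_inter_open] at hdense ⊢
  intro U hU hUne
  obtain ⟨x, hxU, hxI⟩ := hdense U hU hUne
  obtain ⟨_, ⟨i, rfl⟩, hxi⟩ := hxI
  have hVopen : IsOpen (U ∩ interior (A i)) := hU.inter isOpen_interior
  obtain ⟨J, hJfree, hJsub, hJne⟩ := exists_freeInterval_subset (hA i) hVopen
    (fun y hy => interior_subset hy.2) ⟨x, hxU, hxi⟩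
  obtain ⟨y, hy⟩ := hJne
  exact ⟨y, (hJsub hy).1, Set.mem_sUnion.mpr ⟨J, hJfree, hy⟩⟩
end

section
/- Let X be a disjoint union of finitely many circles and S an abelian semigroup. Then S acts in a minimal way on X if and only if there is a semigroup morphism h : S → Homeo(X) such that the subgroup of Homeo(X) generated by h(S) has a minimal natural action on X. -/
/-- The group of homeomorphisms of a space, with `(f * g) x = f (g x)`. -/
instance Homeomorph.instGroupOfHomeomorph {X : Type*} [TopologicalSpace X] : Group (X ≃ₜ X) where
  mul f g := g.trans f
  one := Homeomorph.refl X
  inv := Homeomorph.symm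
  mul_assoc a b c := by ext x; rfl
  one_mul a := by ext x; rfl
  mul_one a := by ext x; rfl
  inv_mul_cancel a := by ext x; exact a.symm_apply_apply x

namespace MinimalActionAux

open Set Function

noncomputable section

local notation "𝕋" => AddCircle (1:ℝ)

/-! ### Elementary facts about `AddCircle 1` -/

lemma coe_eq_coe_iff {x y : ℝ} : (x : 𝕋) = (y : 𝕋) ↔ ∃ m : ℤ, x = y + m := by
  rw [QuotientAddGroup.eq_iff_sub_mem, AddSubgroup.mem_zmultiples_iff]
  constructor
  · rintro ⟨m, hm⟩
    have : (m : ℝ) = x - y := by simpa using hm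
    exact ⟨m, by linarith⟩
  · rintro ⟨m, rfl⟩
    exact ⟨m, by simp⟩

lemma coe_add_int (x : ℝ) (m : ℤ) : ((x + m : ℝ) : 𝕋) = (x : 𝕋) :=
  coe_eq_coe_iff.mpr ⟨m, rfl⟩

lemma no_int_between {m : ℤ} (h1 : (0:ℝ) < m) (h2 : (m:ℝ) < 1) : False := by
  have a1 : 0 < m := by exact_mod_cast h1
  have a2 : m < 1 := by exact_mod_cast h2
  omega

/-- The canonical representative of a point of the circle in `(-1/2, 1/2]`. -/
def lift₀ (v : 𝕋) : ℝ := (AddCircle.equivIoc 1 (-(1/2)) v : ℝ)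

lemma lift₀_mem (v : 𝕋) : lift₀ v ∈ Ioc (-(1/2) : ℝ) (-(1/2) + 1) :=
  (AddCircle.equivIoc 1 (-(1/2)) v).2

lemma lift₀_coe (v : 𝕋) : ((lift₀ v : ℝ) : 𝕋) = v := by
  have h : ((lift₀ v : ℝ) : 𝕋)
      = (AddCircle.equivIoc 1 (-(1/2))).symm (AddCircle.equivIoc 1 (-(1/2)) v) := rfl
  rw [h, Equiv.symm_apply_apply]

lemma lift₀_zero : lift₀ (0 : 𝕋) = 0 := by
  have h0 : ((lift₀ (0:𝕋) : ℝ) : 𝕋) = ((0:ℝ) : 𝕋) := by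
    rw [lift₀_coe]; norm_num
  obtain ⟨m, hm⟩ := coe_eq_coe_iff.mp h0
  have hmem := lift₀_mem (0 : 𝕋)
  rw [hm] at hmem
  obtain ⟨h1, h2⟩ := hmem
  have hm1 : (-1 : ℤ) < m := by exact_mod_cast (show (-1:ℝ) < (m:ℝ) by linarith)
  have hm2 : m < 1 := by exact_mod_cast (show ((m:ℝ)) < 1 by linarith)
  have hm0 : m = 0 := by omega
  rw [hm, hm0]; norm_num

lemma norm_half : ‖((-(1/2) : ℝ) : 𝕋)‖ = 1/2 := by
  have h := (AddCircle.norm_coe_eq_abs_iff (p := (1:ℝ)) (x := -(1/2)) (by norm_num)).mpr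
    (by rw [abs_neg, abs_of_nonneg (by norm_num : (0:ℝ) ≤ 1/2)]; norm_num)
  rw [h, abs_neg, abs_of_nonneg (by norm_num : (0:ℝ) ≤ 1/2)]

lemma continuousAt_lift₀ {v : 𝕋} (hv : ‖v‖ < 1/2) : ContinuousAt lift₀ v := by
  have hne : v ≠ ((-(1/2) : ℝ) : 𝕋) := by
    intro h; rw [h, norm_half] at hv; linarith
  exact (continuous_subtype_val.continuousAt).comp
    (AddCircle.continuousAt_equivIoc 1 (-(1/2)) hne)

/-! ### Lifting continuous maps `ℝ → 𝕋` over an interval -/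

lemma abs_min_sub_min (u v w : ℝ) : |min u w - min v w| ≤ |u - v| := by
  rcases le_total u w with h | h <;> rcases le_total v w with h' | h'
  · rw [min_eq_left h, min_eq_left h']
  · rw [min_eq_left h, min_eq_right h']
    rw [abs_of_nonpos (by linarith), abs_of_nonpos (by linarith)]
    linarith
  · rw [min_eq_right h, min_eq_left h']
    rw [abs_of_nonneg (by linarith), abs_of_nonneg (by linarith)]
    linarith
  · rw [min_eq_right h, min_eq_right h', sub_self, abs_zero]
    exact abs_nonneg _

lemma abs_max_sub_max (w u v : ℝ) : |max w u - max w v| ≤ |u - v| := by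
  rcases le_total u w with h | h <;> rcases le_total v w with h' | h'
  · rw [max_eq_left h, max_eq_left h', sub_self, abs_zero]
    exact abs_nonneg _
  · rw [max_eq_left h, max_eq_right h']
    rw [abs_of_nonpos (by linarith), abs_of_nonpos (by linarith)]
    linarith
  · rw [max_eq_right h, max_eq_left h']
    rw [abs_of_nonneg (by linarith), abs_of_nonneg (by linarith)]
    linarith
  · rw [max_eq_right h, max_eq_right h']

lemma exists_lift (c : ℝ → 𝕋) (hc : Continuous c) (a b : ℝ) (hab : a ≤ b) (ζ : ℝ)
    (hζ : ((ζ : ℝ) : 𝕋) = c a) :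
    ∃ γ : ℝ → ℝ, Continuous γ ∧ γ a = ζ ∧ ∀ x ∈ Icc a b, ((γ x : ℝ) : 𝕋) = c x := by
  classical
  set cb : ℝ → ℝ := fun x => max a (min x b) with hcb_def
  have hcb_cont : Continuous cb := continuous_const.max (continuous_id.min continuous_const)
  have hcb_mem : ∀ x, cb x ∈ Icc a b := fun x =>
    ⟨le_max_left _ _, max_le hab (min_le_right _ _)⟩
  set d : ℝ → 𝕋 := fun x => c (cb x) with hd_def
  have hd_cont : Continuous d := hc.comp hcb_cont
  have hd_eq : ∀ x ∈ Icc a b, d x = c x := by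
    intro x hx
    have : cb x = x := by rw [hcb_def]; simp only; rw [min_eq_left hx.2, max_eq_right hx.1]
    simp only [hd_def, this]
  have hcb_lip : ∀ x y : ℝ, |cb x - cb y| ≤ |x - y| :=
    fun x y => le_trans (abs_max_sub_max a _ _) (abs_min_sub_min x y b)
  obtain ⟨δ, hδpos, hδ⟩ : ∃ δ > 0, ∀ x ∈ Icc a b, ∀ y ∈ Icc a b,
      |x - y| < δ → dist (c x) (c y) < 1/4 := by
    have h1 := (isCompact_Icc (a := a) (b := b)).uniformContinuousOn_of_continuous
      hc.continuousOn
    rw [Metric.uniformContinuousOn_iff] at h1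
    obtain ⟨δ, hδpos, H⟩ := h1 (1/4) (by norm_num)
    exact ⟨δ, hδpos, fun x hx y hy hxy => H x hx y hy (by rwa [Real.dist_eq])⟩
  have hdist : ∀ x y : ℝ, |x - y| < δ → dist (d x) (d y) < 1/4 := by
    intro x y hxy
    exact hδ _ (hcb_mem x) _ (hcb_mem y) (lt_of_le_of_lt (hcb_lip x y) hxy)
  obtain ⟨n, hn⟩ := exists_nat_gt ((b - a) / δ)
  have hba : 0 ≤ b - a := by linarith
  have hn0 : 0 < (n:ℝ) := lt_of_le_of_lt (div_nonneg hba hδpos.le) hn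
  set step : ℝ := (b - a) / n with hstep_def
  have hstep_nonneg : 0 ≤ step := div_nonneg hba hn0.le
  have hstep_lt : step < δ := by
    rw [hstep_def, div_lt_iff₀ hn0]
    have := (div_lt_iff₀ hδpos).mp hn
    nlinarith
  have key : ∀ k : ℕ, ∃ γ : ℝ → ℝ, Continuous γ ∧ γ a = ζ ∧
      ∀ x ≤ a + k * step, ((γ x : ℝ) : 𝕋) = d x := by
    intro k
    induction k with
    | zero =>
      refine ⟨fun _ => ζ, continuous_const, rfl, ?_⟩
      intro x hx
      simp only [Nat.cast_zero, zero_mul, add_zero] at hx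
      have hcbx : cb x = a := by
        rw [hcb_def]; simp only; rw [min_eq_left (le_trans hx hab), max_eq_left hx]
      have : d x = c a := by simp only [hd_def, hcbx]
      rw [this, ← hζ]
    | succ k ih =>
      obtain ⟨γ, hγc, hγa, hγ⟩ := ih
      set u : ℝ := a + k * step with hu_def
      set u' : ℝ := a + (k+1 : ℕ) * step with hu'_def
      have hau : a ≤ u := by
        rw [hu_def]; nlinarith [hstep_nonneg, Nat.cast_nonneg (α := ℝ) k]
      have huu' : u ≤ u' := by
        rw [hu_def, hu'_def]; push_cast; nlinarith [hstep_nonneg]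
      have hau' : a ≤ u' := le_trans hau huu'
      have hdiff : u' - u = step := by rw [hu_def, hu'_def]; push_cast; ring
      set w : ℝ → ℝ := fun x => max u (min x u') with hw_def
      have hw_cont : Continuous w := continuous_const.max (continuous_id.min continuous_const)
      have hw_mem : ∀ x, w x ∈ Icc u u' := fun x =>
        ⟨le_max_left _ _, max_le huu' (min_le_right _ _)⟩
      set m : ℝ → 𝕋 := fun x => d (w x) - d u with hm_def
      have hm_cont : Continuous m := (hd_cont.comp hw_cont).sub continuous_const
      have hm_small : ∀ x, ‖m x‖ < 1/2 := by
        intro x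
        have hb1 : |w x - u| < δ := by
          have h1 := (hw_mem x).1
          have h2 := (hw_mem x).2
          rw [abs_of_nonneg (by linarith)]
          linarith [hdiff, hstep_lt]
        have h2 : dist (d (w x)) (d u) < 1/4 := hdist _ _ hb1
        have h3 : ‖m x‖ = dist (d (w x)) (d u) := by rw [hm_def]; simp [dist_eq_norm]
        rw [h3]; linarith
      set γ' : ℝ → ℝ := fun x => γ (min x u) + lift₀ (m x) with hγ'_def
      have hγ'_cont : Continuous γ' := by
        refine ((hγc.comp (continuous_id.min continuous_const)).add ?_)
        rw [continuous_iff_continuousAt]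
        intro x
        exact (continuousAt_lift₀ (hm_small x)).comp hm_cont.continuousAt
      refine ⟨γ', hγ'_cont, ?_, ?_⟩
      · have h1 : min a u = a := min_eq_left hau
        have h2 : w a = u := by
          rw [hw_def]; simp only; rw [min_eq_left hau', max_eq_left hau]
        have h3 : m a = 0 := by rw [hm_def]; simp only [h2, sub_self]
        rw [hγ'_def]; simp only [h1, h3, lift₀_zero, add_zero, hγa]
      · intro x hx
        rcases le_total x u with hxu | hxu
        · have h1 : min x u = x := min_eq_left hxu
          have h2 : w x = u := by
            rw [hw_def]; simp only
            rw [min_eq_left (le_trans hxu huu'), max_eq_left hxu]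
          have h3 : m x = 0 := by rw [hm_def]; simp only [h2, sub_self]
          have h4 : γ' x = γ x := by rw [hγ'_def]; simp only [h1, h3, lift₀_zero, add_zero]
          rw [h4]
          exact hγ x hxu
        · have h1 : min x u = u := min_eq_right hxu
          have h2 : w x = x := by
            rw [hw_def]; simp only
            rw [min_eq_left hx, max_eq_right hxu]
          have hπγu : ((γ u : ℝ) : 𝕋) = d u := hγ u le_rfl
          have hγ'x : γ' x = γ u + lift₀ (m x) := by rw [hγ'_def]; simp only [h1]
          calc ((γ' x : ℝ) : 𝕋) = ((γ u + lift₀ (m x) : ℝ) : 𝕋) := by rw [hγ'x]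
            _ = ((γ u : ℝ) : 𝕋) + ((lift₀ (m x) : ℝ) : 𝕋) := by
                rw [AddCircle.coe_add]
            _ = d u + (d (w x) - d u) := by rw [hπγu, lift₀_coe, hm_def]
            _ = d x := by rw [h2]; abel
  obtain ⟨γ, h1, h2, h3⟩ := key n
  refine ⟨γ, h1, h2, fun x hx => ?_⟩
  have hb' : a + n * step = b := by
    rw [hstep_def]
    field_simp
    ring
  rw [h3 x (by rw [hb']; exact hx.2), hd_eq x hx]

/-! ### Minimal actions: generic lemmas -/

section Minimal

variable {S : Type*} [AddCommSemigroup S] {X : Type*} [TopologicalSpace X]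
  (φ : S → X → X)

omit [AddCommSemigroup S] in
lemma invariant_dense (hmin : ∀ x, Dense (range fun s => φ s x)) {K : Set X}
    (hK : IsClosed K) (hne : K.Nonempty) (hinv : ∀ s, ∀ x ∈ K, φ s x ∈ K) : K = univ := by
  obtain ⟨z, hz⟩ := hne
  have hsub : (range fun s => φ s z) ⊆ K := by rintro _ ⟨s, rfl⟩; exact hinv s z hz
  have hd : Dense K := (hmin z).mono hsub
  rw [← hK.closure_eq, hd.closure_eq]

omit [TopologicalSpace X] in
lemma comm_apply (hcomp : ∀ s t, φ s ∘ φ t = φ (s+t)) (s t : S) (x : X) :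
    φ s (φ t x) = φ t (φ s x) := by
  have h1 := congrFun (hcomp s t) x
  have h2 := congrFun (hcomp t s) x
  simp only [comp_apply] at h1 h2
  rw [h1, add_comm, ← h2]

lemma agree_everywhere [T2Space X] (hcont : ∀ s, Continuous (φ s))
    (hcomp : ∀ s t, φ s ∘ φ t = φ (s+t)) (hmin : ∀ x, Dense (range fun s => φ s x))
    {s t : S} {x₀ : X} (hx : φ s x₀ = φ t x₀) : ∀ x, φ s x = φ t x := by
  have heq : {x | φ s x = φ t x} = univ := by
    refine invariant_dense φ hmin (isClosed_eq (hcont s) (hcont t)) ⟨x₀, hx⟩ ?_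
    intro u x hx'
    simp only [mem_setOf_eq] at hx' ⊢
    rw [comm_apply φ hcomp s u, hx', comm_apply φ hcomp u t]
  intro x
  have : x ∈ {x | φ s x = φ t x} := heq ▸ mem_univ x
  exact this

lemma fixed_everywhere [T2Space X] (hcont : ∀ s, Continuous (φ s))
    (hcomp : ∀ s t, φ s ∘ φ t = φ (s+t)) (hmin : ∀ x, Dense (range fun s => φ s x))
    {r : S} {x₀ : X} (hx : φ r x₀ = x₀) : ∀ x, φ r x = x := by
  have heq : {x | φ r x = x} = univ := by
    refine invariant_dense φ hmin (isClosed_eq (hcont r) continuous_id) ⟨x₀, hx⟩ ?_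
    intro u x hx'
    simp only [mem_setOf_eq] at hx' ⊢
    rw [comm_apply φ hcomp r u, hx']
  intro x
  have : x ∈ {x | φ r x = x} := heq ▸ mem_univ x
  exact this

lemma surj_of_minimal [CompactSpace X] [T2Space X] (hcont : ∀ s, Continuous (φ s))
    (hcomp : ∀ s t, φ s ∘ φ t = φ (s+t)) (hmin : ∀ x, Dense (range fun s => φ s x))
    (s : S) : Surjective (φ s) := by
  intro y
  have hK : IsClosed (range (φ s)) := (isCompact_range (hcont s)).isClosed
  have heq : range (φ s) = univ := by
    refine invariant_dense φ hmin hK ⟨φ s y, mem_range_self y⟩ ?_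
    rintro u _ ⟨w, rfl⟩
    exact ⟨φ u w, comm_apply φ hcomp s u w⟩
  have : y ∈ range (φ s) := heq ▸ mem_univ y
  exact this

end Minimal

/-! ### The injectivity argument (Theorem A) -/

section Injective

variable {S : Type*} [AddCommSemigroup S] {ℓ : ℕ}

abbrev XX (ℓ : ℕ) := Fin ℓ × 𝕋

lemma fst_const (ψ : XX ℓ → XX ℓ) (hψ : Continuous ψ) (i : Fin ℓ) (θ θ' : 𝕋) :
    (ψ (i, θ)).1 = (ψ (i, θ')).1 := by
  have hc : Continuous (fun θ : 𝕋 => (ψ (i, θ)).1) :=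
    continuous_fst.comp (hψ.comp (Continuous.prodMk_right i))
  have hl : IsLocallyConstant (fun θ : 𝕋 => (ψ (i, θ)).1) :=
    (IsLocallyConstant.iff_continuous _).mpr hc
  exact hl.apply_eq_of_preconnectedSpace θ θ'

lemma injective_of_minimal (φ : S → XX ℓ → XX ℓ) (hcont : ∀ s, Continuous (φ s))
    (hcomp : ∀ s t, φ s ∘ φ t = φ (s+t)) (hmin : ∀ x, Dense (range fun s => φ s x))
    (s₀ : S) : Injective (φ s₀) := by
  intro a b hΦ
  by_contra hne
  have hsurj := surj_of_minimal φ hcont hcomp hmin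
  have hfst : ∀ (s : S) (i : Fin ℓ) (θ θ' : 𝕋), (φ s (i, θ)).1 = (φ s (i, θ')).1 :=
    fun s => fst_const (φ s) (hcont s)
  -- Step 1 : the two points lie on the same circle
  have hab1 : a.1 = b.1 := by
    by_contra hij
    have hσsurj : Surjective (fun i : Fin ℓ => (φ s₀ (i, 0)).1) := by
      intro j
      obtain ⟨x, hx⟩ := hsurj s₀ (j, 0)
      refine ⟨x.1, ?_⟩
      show (φ s₀ (x.1, 0)).1 = j
      rw [hfst s₀ x.1 0 x.2, show ((x.1 : Fin ℓ), x.2) = x from rfl, hx]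
    have hσinj := Finite.injective_iff_surjective.mpr hσsurj
    apply hij
    apply hσinj
    show (φ s₀ (a.1, 0)).1 = (φ s₀ (b.1, 0)).1
    rw [hfst s₀ a.1 0 a.2, hfst s₀ b.1 0 b.2,
      show ((a.1 : Fin ℓ), a.2) = a from rfl, show ((b.1 : Fin ℓ), b.2) = b from rfl, hΦ]
  set i : Fin ℓ := a.1 with hi_def
  have huv : a.2 ≠ b.2 := by
    intro h; exact hne (Prod.ext hab1 h)
  -- Step 2 : coordinates for the two arcs between a and b
  obtain ⟨α, -, hα⟩ := AddCircle.eq_coe_Ico a.2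
  obtain ⟨w₀, -, hw₀⟩ := AddCircle.eq_coe_Ico b.2
  set δ : ℝ := Int.fract (w₀ - α) with hδ_def
  have hδ0 : 0 ≤ δ := Int.fract_nonneg _
  have hδ1 : δ < 1 := Int.fract_lt_one _
  set β : ℝ := α + δ with hβ_def
  have hβv : ((β : ℝ) : 𝕋) = b.2 := by
    rw [← hw₀]
    apply coe_eq_coe_iff.mpr
    refine ⟨-⌊w₀ - α⌋, ?_⟩
    rw [hβ_def, hδ_def, Int.fract]
    push_cast
    ring
  have hδpos : 0 < δ := by
    rcases lt_or_eq_of_le hδ0 with h | h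
    · exact h
    · exfalso
      apply huv
      rw [← hα, ← hβv, hβ_def, ← h, add_zero]
  have hαβ : α < β := by rw [hβ_def]; linarith
  -- Step 3 : the two open "arc interior" sets
  have hπopen : IsOpenMap (fun r : ℝ => ((r : ℝ) : 𝕋)) := QuotientAddGroup.isOpenMap_coe
  set U1 : Set (XX ℓ) := ((fun p : XX ℓ => p.1) ⁻¹' {i}) ∩
      ((fun p : XX ℓ => p.2) ⁻¹' ((fun r : ℝ => ((r : ℝ) : 𝕋)) '' Ioo α β)) with hU1_def
  set U2 : Set (XX ℓ) := ((fun p : XX ℓ => p.1) ⁻¹' {i}) ∩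
      ((fun p : XX ℓ => p.2) ⁻¹' ((fun r : ℝ => ((r : ℝ) : 𝕋)) '' Ioo β (α+1))) with hU2_def
  have hU1open : IsOpen U1 :=
    ((isOpen_discrete _).preimage continuous_fst).inter
      ((hπopen _ isOpen_Ioo).preimage continuous_snd)
  have hU2open : IsOpen U2 :=
    ((isOpen_discrete _).preimage continuous_fst).inter
      ((hπopen _ isOpen_Ioo).preimage continuous_snd)
  have hU1ne : U1.Nonempty :=
    ⟨(i, (((α+β)/2 : ℝ) : 𝕋)), by simp only [hU1_def, mem_inter_iff, mem_preimage,
      mem_singleton_iff], ⟨(α+β)/2, ⟨by linarith, by linarith⟩, rfl⟩⟩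
  have hU2ne : U2.Nonempty :=
    ⟨(i, (((β+α+1)/2 : ℝ) : 𝕋)), by simp only [hU2_def, mem_inter_iff, mem_preimage,
      mem_singleton_iff], ⟨(β+α+1)/2, ⟨by linarith, by rw [hβ_def]; linarith⟩, rfl⟩⟩
  -- Step 4 : pick z ∈ U1, z' ∈ U2 in the orbit of y := φ s₀ a
  set y : XX ℓ := φ s₀ a with hy_def
  obtain ⟨z, hzmem, hzU⟩ := (hmin y).exists_mem_open hU1open hU1ne
  obtain ⟨t, hzt⟩ := hzmem
  obtain ⟨z', hzmem', hzU'⟩ := (hmin y).exists_mem_open hU2open hU2ne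
  obtain ⟨t', hzt'⟩ := hzmem'
  simp only at hzt hzt'
  obtain ⟨hz1, ζ, hζmem, hζπ⟩ := hzU
  obtain ⟨hz'1, ζ', hζ'mem, hζ'π⟩ := hzU'
  simp only [mem_preimage, mem_singleton_iff] at hz1 hz'1
  have hζπ2 : ((ζ : ℝ) : 𝕋) = z.2 := hζπ
  have hζ'π2 : ((ζ' : ℝ) : 𝕋) = z'.2 := hζ'π
  have hbp : ((i : Fin ℓ), b.2) = b := Prod.ext hab1 rfl
  have hGa : φ (t + s₀) a = z := by
    rw [← hcomp t s₀]; exact hzt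
  have hGb : φ (t + s₀) b = z := by
    rw [← hcomp t s₀]; show φ t (φ s₀ b) = z; rw [← hΦ]; exact hzt
  have hG'a : φ (t' + s₀) a = z' := by
    rw [← hcomp t' s₀]; exact hzt'
  have hG'b : φ (t' + s₀) b = z' := by
    rw [← hcomp t' s₀]; show φ t' (φ s₀ b) = z'; rw [← hΦ]; exact hzt'
  -- the maps G, G' preserve the circle i
  have hGfst : ∀ θ : 𝕋, (φ (t + s₀) (i, θ)).1 = i := by
    intro θ
    rw [hfst (t+s₀) i θ a.2, show ((i : Fin ℓ), a.2) = a from rfl, hGa, hz1]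
  have hG'fst : ∀ θ : 𝕋, (φ (t' + s₀) (i, θ)).1 = i := by
    intro θ
    rw [hfst (t'+s₀) i θ a.2, show ((i : Fin ℓ), a.2) = a from rfl, hG'a, hz'1]
  -- Step 5 : lifts of the two maps along the arc [α, β]
  have hπcont : Continuous (fun r : ℝ => ((r : ℝ) : 𝕋)) := continuous_quotient_mk'
  set g1 : ℝ → 𝕋 := fun x => (φ (t + s₀) (i, ((x : ℝ) : 𝕋))).2 with hg1_def
  set g2 : ℝ → 𝕋 := fun x => (φ (t' + s₀) (i, ((x : ℝ) : 𝕋))).2 with hg2_def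
  have hg1cont : Continuous g1 :=
    continuous_snd.comp ((hcont _).comp ((Continuous.prodMk_right i).comp hπcont))
  have hg2cont : Continuous g2 :=
    continuous_snd.comp ((hcont _).comp ((Continuous.prodMk_right i).comp hπcont))
  have hg1α : ((ζ : ℝ) : 𝕋) = g1 α := by
    rw [hg1_def]; simp only
    rw [hα, show ((i : Fin ℓ), a.2) = a from rfl, hGa, hζπ2]
  have hg2α : ((ζ' : ℝ) : 𝕋) = g2 α := by
    rw [hg2_def]; simp only
    rw [hα, show ((i : Fin ℓ), a.2) = a from rfl, hG'a, hζ'π2]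
  obtain ⟨γ1, hγ1cont, hγ1α, hγ1π⟩ := exists_lift g1 hg1cont α β (le_of_lt hαβ) ζ hg1α
  obtain ⟨γ2, hγ2cont, hγ2α, hγ2π⟩ := exists_lift g2 hg2cont α β (le_of_lt hαβ) ζ' hg2α
  -- winding integers
  have hγ1β : ∃ m : ℤ, γ1 β = ζ + m := by
    apply coe_eq_coe_iff.mp
    rw [hγ1π β ⟨le_of_lt hαβ, le_refl β⟩, hg1_def]; simp only
    rw [hβv, hbp, hGb, hζπ2]
  have hγ2β : ∃ m : ℤ, γ2 β = ζ' + m := by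
    apply coe_eq_coe_iff.mp
    rw [hγ2π β ⟨le_of_lt hαβ, le_refl β⟩, hg2_def]; simp only
    rw [hβv, hbp, hG'b, hζ'π2]
  obtain ⟨m1, hm1⟩ := hγ1β
  obtain ⟨m2, hm2⟩ := hγ2β
  -- z ≠ a and z' ≠ a (needed to rule out fixed points)
  have hζαβ : α < ζ ∧ ζ < β := ⟨hζmem.1, hζmem.2⟩
  have hζ'αβ : β < ζ' ∧ ζ' < α + 1 := ⟨hζ'mem.1, hζ'mem.2⟩
  have hza : z ≠ a := by
    intro h
    have h2 : ((ζ : ℝ) : 𝕋) = ((α : ℝ) : 𝕋) := by rw [hζπ2, h, hα]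
    obtain ⟨m, hm⟩ := coe_eq_coe_iff.mp h2
    have hmv : (m:ℝ) = ζ - α := by linarith
    have hc2 : ζ < α + δ := by have := hζαβ.2; rw [hβ_def] at this; exact this
    refine no_int_between (m := m) ?_ ?_
    · rw [hmv]; linarith [hζαβ.1]
    · rw [hmv]; linarith [hδ1]
  have hz'a : z' ≠ a := by
    intro h
    have h2 : ((ζ' : ℝ) : 𝕋) = ((α : ℝ) : 𝕋) := by rw [hζ'π2, h, hα]
    obtain ⟨m, hm⟩ := coe_eq_coe_iff.mp h2
    have hmv : (m:ℝ) = ζ' - α := by linarith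
    have hc1 : α + δ < ζ' := by have := hζ'αβ.1; rw [hβ_def] at this; exact this
    refine no_int_between (m := m) ?_ ?_
    · rw [hmv]; linarith [hδpos]
    · rw [hmv]; linarith [hζ'αβ.2]
  -- no map of the semigroup has a fixed point unless trivial
  have hfix_contra : ∀ (r : S) (wp : ℝ), φ r (i, ((wp : ℝ) : 𝕋)) = (i, ((wp : ℝ) : 𝕋)) →
      φ r a = a := by
    intro r wp hfix
    exact fixed_everywhere φ hcont hcomp hmin hfix a
  -- Step 6 : m1 ≠ 0
  have hm1ne : m1 ≠ 0 := by
    intro hm10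
    have hcont' : ContinuousOn (fun x => γ1 x - x) (Icc α β) :=
      (hγ1cont.sub continuous_id).continuousOn
    have hfβ : γ1 β - β ≤ 0 := by
      rw [hm1, hm10]; push_cast; rw [add_zero]; linarith [hζαβ.2]
    have hfα : 0 ≤ γ1 α - α := by rw [hγ1α]; linarith [hζαβ.1]
    obtain ⟨w, hwmem, hw⟩ := intermediate_value_Icc' (le_of_lt hαβ) hcont' ⟨hfβ, hfα⟩
    have hγw : γ1 w = w := by have hw' : γ1 w - w = 0 := hw; linarith
    have hfixw : φ (t + s₀) (i, ((w : ℝ) : 𝕋)) = (i, ((w : ℝ) : 𝕋)) := by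
      apply Prod.ext
      · exact hGfst _
      · show g1 w = ((w : ℝ) : 𝕋)
        rw [← hγ1π w hwmem, hγw]
    have := hfix_contra _ _ hfixw
    rw [hGa] at this
    exact hza this
  -- Step 7 : m2 = 0
  have hm2eq : m2 = 0 := by
    by_contra hm20
    have hcont' : ContinuousOn (fun x => γ2 x - x) (Icc α β) :=
      (hγ2cont.sub continuous_id).continuousOn
    have hfα : γ2 α - α = ζ' - α := by rw [hγ2α]
    have hfβ : γ2 β - β = ζ' - β + m2 := by rw [hm2]; ring
    have hζ'αpos : 0 < ζ' - α := by rw [hβ_def] at hζ'αβ; linarith [hδpos]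
    have hζ'αlt : ζ' - α < 1 := by linarith [hζ'αβ.2]
    have hζ'βpos : 0 < ζ' - β := by linarith [hζ'αβ.1]
    have hζ'βlt : ζ' - β < 1 - δ := by rw [hβ_def]; rw [hβ_def] at hζ'αβ; linarith [hζ'αβ.2]
    obtain ⟨w, hwmem, hw⟩ : ∃ w ∈ Icc α β, γ2 w - w = (m2 : ℝ) + 0 ∨ γ2 w - w = 0 := by
      rcases lt_or_gt_of_ne hm20 with hneg | hpos
      · -- m2 ≤ -1 : value 0 between f β and f α
        have hm2le : (m2 : ℝ) ≤ -1 := by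
          have : m2 ≤ -1 := by omega
          exact_mod_cast this
        have h1 : γ2 β - β ≤ 0 := by rw [hfβ]; linarith
        have h2 : 0 ≤ γ2 α - α := by rw [hfα]; linarith
        obtain ⟨w, hwmem, hw⟩ := intermediate_value_Icc' (le_of_lt hαβ) hcont' ⟨h1, h2⟩
        exact ⟨w, hwmem, Or.inr hw⟩
      · -- m2 ≥ 1 : value m2 between f α and f β
        have hm2ge : (1:ℝ) ≤ (m2 : ℝ) := by exact_mod_cast hpos
        have h1 : γ2 α - α ≤ (m2:ℝ) + 0 := by rw [hfα, add_zero]; linarith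
        have h2 : (m2:ℝ) + 0 ≤ γ2 β - β := by rw [hfβ, add_zero]; linarith
        obtain ⟨w, hwmem, hw⟩ := intermediate_value_Icc (le_of_lt hαβ) hcont' ⟨h1, h2⟩
        exact ⟨w, hwmem, Or.inl hw⟩
    have hγw : ((γ2 w : ℝ) : 𝕋) = ((w : ℝ) : 𝕋) := by
      rcases hw with hw | hw
      · have : γ2 w = w + m2 := by linarith
        rw [this, coe_add_int]
      · have : γ2 w = w := by linarith
        rw [this]
    have hfixw : φ (t' + s₀) (i, ((w : ℝ) : 𝕋)) = (i, ((w : ℝ) : 𝕋)) := by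
      apply Prod.ext
      · exact hG'fst _
      · show g2 w = ((w : ℝ) : 𝕋)
        rw [← hγ2π w hwmem, hγw]
    have := hfix_contra _ _ hfixw
    rw [hG'a] at this
    exact hz'a this
  -- Step 8 : coincidence of the two maps somewhere on the arc
  have hDcont : ContinuousOn (fun x => γ1 x - γ2 x) (Icc α β) :=
    (hγ1cont.sub hγ2cont).continuousOn
  have hDα : γ1 α - γ2 α = ζ - ζ' := by rw [hγ1α, hγ2α]
  have hDβ : γ1 β - γ2 β = ζ - ζ' + m1 := by rw [hm1, hm2, hm2eq]; push_cast; ring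
  obtain ⟨w, hwmem, hw⟩ : ∃ w ∈ Icc α β, ∃ nn : ℤ, γ1 w - γ2 w = nn := by
    rcases lt_or_gt_of_ne hm1ne with hneg | hpos
    · have hm1le : (m1 : ℝ) ≤ -1 := by
        have : m1 ≤ -1 := by omega
        exact_mod_cast this
      set nn : ℤ := ⌈ζ - ζ' + m1⌉ with hnn_def
      have h1 : γ1 β - γ2 β ≤ (nn:ℝ) := by rw [hDβ]; exact Int.le_ceil _
      have h2 : (nn:ℝ) ≤ γ1 α - γ2 α := by
        rw [hDα]
        have := Int.ceil_lt_add_one (ζ - ζ' + m1)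
        linarith
      obtain ⟨w, hwmem, hw⟩ := intermediate_value_Icc' (le_of_lt hαβ) hDcont ⟨h1, h2⟩
      exact ⟨w, hwmem, nn, hw⟩
    · have hm1ge : (1:ℝ) ≤ (m1 : ℝ) := by exact_mod_cast hpos
      set nn : ℤ := ⌈ζ - ζ'⌉ with hnn_def
      have h1 : γ1 α - γ2 α ≤ (nn:ℝ) := by rw [hDα]; exact Int.le_ceil _
      have h2 : (nn:ℝ) ≤ γ1 β - γ2 β := by
        rw [hDβ]
        have := Int.ceil_lt_add_one (ζ - ζ')
        linarith
      obtain ⟨w, hwmem, hw⟩ := intermediate_value_Icc (le_of_lt hαβ) hDcont ⟨h1, h2⟩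
      exact ⟨w, hwmem, nn, hw⟩
  obtain ⟨nn, hnn⟩ := hw
  -- the two maps agree at (i, w), hence everywhere, hence z = z' : contradiction
  have hcoin : φ (t + s₀) (i, ((w : ℝ) : 𝕋)) = φ (t' + s₀) (i, ((w : ℝ) : 𝕋)) := by
    apply Prod.ext
    · rw [hGfst, hG'fst]
    · show g1 w = g2 w
      rw [← hγ1π w hwmem, ← hγ2π w hwmem]
      have : γ1 w = γ2 w + nn := by linarith
      rw [this, coe_add_int]
  have hall := agree_everywhere φ hcont hcomp hmin hcoin
  have hzz' : z = z' := by rw [← hGa, ← hG'a]; exact hall a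
  -- but z ∈ U1 and z' ∈ U2 are disjoint
  have h2 : ((ζ : ℝ) : 𝕋) = ((ζ' : ℝ) : 𝕋) := by rw [hζπ2, hζ'π2, hzz']
  obtain ⟨m, hm⟩ := coe_eq_coe_iff.mp h2
  have h4 : (0:ℝ) < ζ' - ζ := by linarith [hζ'αβ.1, hζαβ.2]
  have h5 : (ζ' - ζ : ℝ) < 1 := by linarith [hζ'αβ.2, hζαβ.1]
  refine no_int_between (m := -m) ?_ ?_
  · push_cast; linarith
  · push_cast; linarith

end Injective

end

end MinimalActionAux

theorem minimal_semigroup_action_iff_minimal_generated_subgroup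
    {S : Type*} [AddCommSemigroup S] (ℓ : ℕ) (hℓ : 0 < ℓ) :
    (∃ φ : S → (Fin ℓ × AddCircle (1:ℝ)) → (Fin ℓ × AddCircle (1:ℝ)),
        (∀ s, Continuous (φ s)) ∧ (∀ s t, φ s ∘ φ t = φ (s + t)) ∧
        (∀ x, Dense (Set.range fun s => φ s x))) ↔
    (∃ h : S → (Fin ℓ × AddCircle (1:ℝ)) ≃ₜ (Fin ℓ × AddCircle (1:ℝ)),
        (∀ s t, h s * h t = h (s + t)) ∧
        (∀ x, Dense {y | ∃ g ∈ Subgroup.closure (Set.range h), g x = y})) := by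
  constructor
  · rintro ⟨φ, hcont, hcomp, hmin⟩
    have hbij : ∀ s, Function.Bijective (φ s) := fun s =>
      ⟨MinimalActionAux.injective_of_minimal φ hcont hcomp hmin s,
       MinimalActionAux.surj_of_minimal φ hcont hcomp hmin s⟩
    let h : S → (Fin ℓ × AddCircle (1:ℝ)) ≃ₜ (Fin ℓ × AddCircle (1:ℝ)) := fun s =>
      Continuous.homeoOfEquivCompactToT2 (f := Equiv.ofBijective (φ s) (hbij s)) (hcont s)
    have hcoe : ∀ s x, h s x = φ s x := fun s x => rfl
    refine ⟨h, ?_, ?_⟩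
    · intro s t
      exact DFunLike.ext _ _ fun x => congrFun (hcomp s t) x
    · intro x
      refine (hmin x).mono ?_
      rintro _ ⟨s, rfl⟩
      exact ⟨h s, Subgroup.subset_closure ⟨s, rfl⟩, rfl⟩
  · rintro ⟨h, hmul, hdense⟩
    have happly : ∀ s t x, h s (h t x) = h (s+t) x := by
      intro s t x
      exact congrArg (fun g : (Fin ℓ × AddCircle (1:ℝ)) ≃ₜ _ => g x) (hmul s t)
    by_cases hS : Nonempty S
    · obtain ⟨s₀⟩ := hS
      haveI : Nonempty S := ⟨s₀⟩
      refine ⟨fun s => ⇑(h s), fun s => (h s).continuous, ?_, ?_⟩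
      · intro s t; funext x; exact happly s t x
      · intro x
        set O : Set (Fin ℓ × AddCircle (1:ℝ)) := Set.range fun s => (h s) x with hO
        set Y : Set (Fin ℓ × AddCircle (1:ℝ)) := closure O with hY
        have hYcomp : IsCompact Y := isClosed_closure.isCompact
        have hYne : Y.Nonempty := ⟨h s₀ x, subset_closure (Set.mem_range_self s₀)⟩
        have himg : ∀ s, ⇑(h s) '' Y ⊆ Y := by
          intro s
          have h1 : ⇑(h s) '' O ⊆ O := by
            rintro _ ⟨_, ⟨t, rfl⟩, rfl⟩
            exact ⟨s + t, (happly s t x).symm⟩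
          calc ⇑(h s) '' Y ⊆ closure (⇑(h s) '' O) :=
                image_closure_subset_closure_image (h s).continuous
            _ ⊆ closure O := closure_mono h1
        set F : S → Set (Fin ℓ × AddCircle (1:ℝ)) := fun s => ⇑(h s) '' Y with hF
        have hFcomp : ∀ s, IsCompact (F s) := fun s => hYcomp.image (h s).continuous
        have hFne : ∀ s, (F s).Nonempty := fun s => hYne.image _
        have hFcl : ∀ s, IsClosed (F s) := fun s => (hFcomp s).isClosed
        have hFcompimg : ∀ s u, ⇑(h s) '' F u = F (s + u) := by
          intro s u
          show ⇑(h s) '' (⇑(h u) '' Y) = ⇑(h (s+u)) '' Y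
          have hfun : ⇑(h s) ∘ ⇑(h u) = ⇑(h (s+u)) := funext fun w => happly s u w
          rw [← Set.image_comp, hfun]
        have hFmono : ∀ s u, F (s + u) ⊆ F u := by
          intro s u
          have he : F (s + u) = ⇑(h u) '' (⇑(h s) '' Y) := by
            rw [hFcompimg u s, add_comm u s]
          rw [he]
          exact (Set.image_mono (himg s)).trans (le_refl _)
        have hdir : Directed (· ⊇ ·) F := by
          intro s u
          refine ⟨s + u, ?_, hFmono s u⟩
          rw [add_comm s u]
          exact hFmono u s
        have hKne : (⋂ s, F s).Nonempty :=
          IsCompact.nonempty_iInter_of_directed_nonempty_isCompact_isClosed F hdir hFne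
            hFcomp hFcl
        set K : Set (Fin ℓ × AddCircle (1:ℝ)) := ⋂ s, F s with hK
        have hKsub : ∀ s, ⇑(h s) '' K ⊆ K := by
          intro s
          rw [hK, Set.subset_iInter_iff]
          intro u
          have h1 : K ⊆ F u := Set.iInter_subset F u
          calc ⇑(h s) '' K ⊆ ⇑(h s) '' F u := Set.image_mono h1
            _ = F (s + u) := hFcompimg s u
            _ ⊆ F u := hFmono s u
        have hKsup : ∀ s, K ⊆ ⇑(h s) '' K := by
          intro s x' hx'
          refine ⟨(h s).symm x', ?_, (h s).apply_symm_apply x'⟩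
          rw [hK, Set.mem_iInter]
          intro u
          have h1 : x' ∈ F (s + u) := Set.mem_iInter.mp hx' (s + u)
          obtain ⟨w0, hw0, hw0x⟩ := h1
          have : (h s).symm x' = h u w0 := by
            apply (h s).injective
            rw [(h s).apply_symm_apply, ← hw0x, happly s u w0]
          rw [this]
          exact ⟨w0, hw0, rfl⟩
        have hKeq : ∀ s, ⇑(h s) '' K = K := fun s =>
          le_antisymm (hKsub s) (hKsup s)
        let H : Subgroup ((Fin ℓ × AddCircle (1:ℝ)) ≃ₜ (Fin ℓ × AddCircle (1:ℝ))) :=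
          { carrier := {g | ⇑g '' K = K}
            one_mem' := by
              show ⇑(1 : (Fin ℓ × AddCircle (1:ℝ)) ≃ₜ _) '' K = K
              rw [show ⇑(1 : (Fin ℓ × AddCircle (1:ℝ)) ≃ₜ _) = id from rfl, Set.image_id]
            mul_mem' := by
              intro g₁ g₂ h₁ h₂
              show ⇑(g₁ * g₂) '' K = K
              have he : ⇑(g₁ * g₂) = ⇑g₁ ∘ ⇑g₂ := rfl
              rw [he, Set.image_comp]
              have h₂' : ⇑g₂ '' K = K := h₂
              have h₁' : ⇑g₁ '' K = K := h₁
              rw [h₂', h₁']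
            inv_mem' := by
              intro g hg
              show ⇑g⁻¹ '' K = K
              have hgK : ⇑g '' K = K := hg
              conv_lhs => rw [← hgK]
              rw [← Set.image_comp]
              have he : (⇑g⁻¹ ∘ ⇑g) = id := funext fun w => g.symm_apply_apply w
              rw [he, Set.image_id] }
        have hclosure : Subgroup.closure (Set.range h) ≤ H := by
          apply (Subgroup.closure_le H).mpr
          rintro g ⟨s, rfl⟩
          show ⇑(h s) '' K = K
          exact hKeq s
        obtain ⟨z, hz⟩ := hKne
        have hKcl : IsClosed K := isClosed_iInter fun s => hFcl s
        have hDsub : {y | ∃ g ∈ Subgroup.closure (Set.range h), g z = y} ⊆ K := by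
          rintro _ ⟨g, hg, rfl⟩
          have hgK : ⇑g '' K = K := hclosure hg
          rw [← hgK]
          exact ⟨z, hz, rfl⟩
        have hKuniv : K = Set.univ := by
          have hd : Dense K := (hdense z).mono hDsub
          rw [← hKcl.closure_eq, hd.closure_eq]
        have hYuniv : Y = Set.univ := by
          apply Set.eq_univ_of_forall
          intro w
          have h1 : h s₀ w ∈ K := hKuniv ▸ Set.mem_univ _
          have h2 : h s₀ w ∈ F s₀ := Set.mem_iInter.mp h1 s₀
          obtain ⟨w', hw'Y, hw'⟩ := h2
          have : w' = w := (h s₀).injective hw'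
          rwa [← this]
        show Dense (Set.range fun s => (h s) x)
        rw [dense_iff_closure_eq]
        exact hYuniv
    · exfalso
      haveI : IsEmpty S := not_nonempty_iff.mp hS
      set x₀ : Fin ℓ × AddCircle (1:ℝ) := ((⟨0, hℓ⟩ : Fin ℓ), (0:AddCircle (1:ℝ))) with hx₀
      have hx := hdense x₀
      have hempty : Set.range h = ∅ := Set.range_eq_empty _
      rw [hempty, Subgroup.closure_empty] at hx
      have hset : {y | ∃ g ∈ (⊥ : Subgroup ((Fin ℓ × AddCircle (1:ℝ)) ≃ₜ _)), g x₀ = y}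
          = {x₀} := by
        ext y
        simp only [Subgroup.mem_bot, Set.mem_setOf_eq, Set.mem_singleton_iff,
          exists_eq_left]
        constructor
        · rintro h1
          rw [← h1]
          rfl
        · rintro rfl
          rfl
      rw [hset] at hx
      have hcl := hx.closure_eq
      rw [closure_singleton] at hcl
      have h2 : ((⟨0, hℓ⟩ : Fin ℓ), ((1/2 : ℝ) : AddCircle (1:ℝ))) ∈ ({x₀} : Set _) := by
        rw [hcl]; trivial
      rw [Set.mem_singleton_iff, hx₀, Prod.mk.injEq] at h2
      obtain ⟨-, h3⟩ := h2
      rw [AddCircle.coe_eq_zero_iff] at h3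
      obtain ⟨n, hn⟩ := h3
      have h4 : (n:ℝ) = 1/2 := by simpa using hn
      have h5 : (2*n : ℝ) = 1 := by linarith
      have h6 : (2*n : ℤ) = 1 := by exact_mod_cast h5
      omega
end

section
/- Let H be a dense subgroup of the circle group S¹, K an abelian group of finite cardinality ℓ, and f : K × K → H a symmetric 2-cocycle. Define, for each g = (k,h) ∈ K ×_f H, the map φ_g : K × S¹ → K × S¹ by φ_{(k,h)}(a,b) = (k+a, b+h+f(k,a)). Then these maps form an effective group action of the extension group K ×_f H on the space X = K × S¹ (a disjoint union of ℓ circles), and this action is minimal. -/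
theorem cocycle_extension_minimal_effective_action
    {K : Type*} [AddCommGroup K] [Fintype K] [TopologicalSpace K] [DiscreteTopology K]
    (H : AddSubgroup (AddCircle (1:ℝ))) (hH : Dense (H : Set (AddCircle (1:ℝ))))
    (f : K → K → H)
    (hsym : ∀ k₁ k₂, f k₁ k₂ = f k₂ k₁)
    (hcoc : ∀ k₁ k₂ k₃, f k₁ k₂ + f (k₁ + k₂) k₃ = f k₂ k₃ + f (k₂ + k₃) k₁)
    (hzero : ∀ k, f 0 k = 0 ∧ f k 0 = 0) :
    (∀ g : K × H, Continuous (fun x : K × AddCircle (1:ℝ) =>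
        ((g.1 + x.1, x.2 + (g.2 : AddCircle (1:ℝ)) + ((f g.1 x.1 : H) : AddCircle (1:ℝ)))
          : K × AddCircle (1:ℝ)))) ∧
    (∀ g g' : K × H, ∀ x : K × AddCircle (1:ℝ),
        (g.1 + (g'.1 + x.1),
          (x.2 + (g'.2 : AddCircle (1:ℝ)) + ((f g'.1 x.1 : H) : AddCircle (1:ℝ)))
            + (g.2 : AddCircle (1:ℝ)) + ((f g.1 (g'.1 + x.1) : H) : AddCircle (1:ℝ)))
        = ((g.1 + g'.1) + x.1,
            x.2 + ((g.2 + g'.2 + f g.1 g'.1 : H) : AddCircle (1:ℝ))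
              + ((f (g.1 + g'.1) x.1 : H) : AddCircle (1:ℝ)))) ∧
    (∀ g : K × H, (∀ x : K × AddCircle (1:ℝ),
        (g.1 + x.1, x.2 + (g.2 : AddCircle (1:ℝ)) + ((f g.1 x.1 : H) : AddCircle (1:ℝ))) = x)
        → g = 0) ∧
    (∀ x : K × AddCircle (1:ℝ), Dense {y : K × AddCircle (1:ℝ) | ∃ g : K × H,
        (g.1 + x.1, x.2 + (g.2 : AddCircle (1:ℝ)) + ((f g.1 x.1 : H) : AddCircle (1:ℝ))) = y}) := by
  refine ⟨?_, ?_, ?_, ?_⟩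
  · -- continuity
    intro g
    refine Continuous.prodMk ?_ ?_
    · exact (continuous_of_discreteTopology (α := K)
        (f := fun k => g.1 + k)).comp continuous_fst
    · refine Continuous.add (Continuous.add continuous_snd continuous_const) ?_
      exact (continuous_of_discreteTopology (α := K)
        (f := fun k => ((f g.1 k : H) : AddCircle (1:ℝ)))).comp continuous_fst
  · -- group action law
    intro g g' x
    have hH2 : (g'.2 + f g'.1 x.1 + g.2 + f g.1 (g'.1 + x.1) : H)
        = g.2 + g'.2 + f g.1 g'.1 + f (g.1 + g'.1) x.1 := by
      rw [hsym g.1 (g'.1 + x.1)]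
      conv_rhs => rw [add_assoc, hcoc]
      abel
    simp only [Prod.mk.injEq]
    refine ⟨(add_assoc _ _ _).symm, ?_⟩
    have h1 : x.2 + (g'.2 : AddCircle (1:ℝ)) + ((f g'.1 x.1 : H) : AddCircle (1:ℝ))
        + (g.2 : AddCircle (1:ℝ)) + ((f g.1 (g'.1 + x.1) : H) : AddCircle (1:ℝ))
        = x.2 + ((g'.2 + f g'.1 x.1 + g.2 + f g.1 (g'.1 + x.1) : H) : AddCircle (1:ℝ)) := by
      push_cast
      abel
    rw [h1, hH2]
    push_cast
    abel
  · -- effective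
    intro g hg
    have h0 := hg (0, 0)
    have h1 : g.1 = 0 := by
      have := congrArg Prod.fst h0
      simpa using this
    have h2 : g.2 = 0 := by
      have := congrArg Prod.snd h0
      simp only [h1, (hzero 0).1] at this
      have h3 : ((g.2 : AddCircle (1:ℝ))) = 0 := by simpa using this
      exact Subtype.ext h3
    exact Prod.ext h1 h2
  · -- minimal
    intro x
    rw [dense_iff_inter_open]
    rintro U hU ⟨⟨a, t⟩, hat⟩
    set c : AddCircle (1:ℝ) := ((f (a - x.1) x.1 : H) : AddCircle (1:ℝ)) with hc
    have hsurj : Function.Surjective (fun y : AddCircle (1:ℝ) => x.2 + y + c) := by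
      intro b; exact ⟨b - c - x.2, by show x.2 + (b - c - x.2) + c = b; rw [add_comm x.2, sub_add_cancel, sub_add_cancel]⟩
    have hcont : Continuous (fun y : AddCircle (1:ℝ) => x.2 + y + c) := by
      continuity
    have hhom : Dense ((fun y : AddCircle (1:ℝ) => x.2 + y + c) '' (H : Set (AddCircle (1:ℝ)))) :=
      hsurj.denseRange.dense_image hcont hH
    have hV : IsOpen {b : AddCircle (1:ℝ) | (a, b) ∈ U} :=
      hU.preimage (Continuous.prodMk_right a)
    obtain ⟨t', ht'D, ht'V⟩ := hhom.exists_mem_open hV ⟨t, hat⟩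
    obtain ⟨h, hhH, hh⟩ := ht'D
    refine ⟨(a, t'), ht'V, ⟨(a - x.1, ⟨h, hhH⟩), ?_⟩⟩
    simp only [Prod.mk.injEq]
    constructor
    · exact sub_add_cancel a x.1
    · simpa [hc] using hh
end
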